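/- arXiv:0809.1027 — 10 statements merged into one kernel-verified Lean document; each statement's English description precedes it below -/
import Mathlib

section
/- Let g be a log-concave probability density on ℝ, symmetric about 0 and unimodal at 0, and let y : [0,∞) → [0,∞) be a nonnegative nondecreasing function. Then θ ↦ g(y(θ))/g(y(θ)+θ) is nondecreasing on [0,∞). -/
open MeasureTheory Set

lemma concave_shift {f : ℝ → ℝ} {S : Set ℝ} (h : ConcaveOn ℝ S f)
    {a b t : ℝ} (hab : a ≤ b) (ht : 0 ≤ t)
    (ha : a ∈ S) (hb : b ∈ S) (hat : a + t ∈ S) (hbt : b + t ∈ S) :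
    f a + f (b + t) ≤ f b + f (a + t) := by
  rcases eq_or_lt_of_le (by linarith : a ≤ b + t) with he | hd
  · have hab' : a = b := by linarith
    have ht' : t = 0 := by linarith
    simp [hab', ht']
  · set d := b + t - a with hdd
    have hd0 : 0 < d := by simp [hdd]; linarith
    have hl1 : 0 ≤ t / d := div_nonneg ht hd0.le
    have hl2 : t / d ≤ 1 := by
      rw [div_le_one hd0]; linarith
    have h1 := h.2 ha hbt hl1 (by linarith : (0:ℝ) ≤ 1 - t / d) (by ring)
    have h2 := h.2 ha hbt (by linarith : (0:ℝ) ≤ 1 - t / d) hl1 (by ring)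
    have e1 : (t / d) • a + (1 - t / d) • (b + t) = b := by
      simp only [smul_eq_mul]
      field_simp
      ring
    have e2 : (1 - t / d) • a + (t / d) • (b + t) = a + t := by
      simp only [smul_eq_mul]
      field_simp
      ring
    rw [e1] at h1
    rw [e2] at h2
    simp only [smul_eq_mul] at h1 h2
    linarith

theorem stmt_2 (g : ℝ → ℝ) (y : ℝ → ℝ)
    (hnonneg : ∀ x, 0 ≤ g x)
    (hint : ∫ x, g x = 1)
    (hsym : ∀ x, g (-x) = g x)
    (hunimodal : AntitoneOn g (Set.Ici 0))
    (hlogconc : ConcaveOn ℝ {x | 0 < g x} (fun x => Real.log (g x)))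
    (hynonneg : ∀ θ, 0 ≤ θ → 0 ≤ y θ)
    (hymono : MonotoneOn y (Set.Ici 0))
    (hden : ∀ θ, 0 ≤ θ → 0 < g (y θ + θ)) :
    MonotoneOn (fun θ => g (y θ) / g (y θ + θ)) (Set.Ici 0) := by
  intro s hs u hu hsu
  simp only
  have hs0 : (0:ℝ) ≤ s := hs
  have hu0 : (0:ℝ) ≤ u := hu
  have hy1 : 0 ≤ y s := hynonneg s hs0
  have hy2 : 0 ≤ y u := hynonneg u hu0
  have hyle : y s ≤ y u := hymono hs hu hsu
  -- positivity facts
  have hg1 : 0 < g (y s) :=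
    lt_of_lt_of_le (hden s hs0) (hunimodal hy1 (by simp; linarith) (by linarith))
  have hg2 : 0 < g (y u) :=
    lt_of_lt_of_le (hden u hu0) (hunimodal hy2 (by simp; linarith) (by linarith))
  have hgsu : 0 < g (y s + u) :=
    lt_of_lt_of_le (hden u hu0) (hunimodal (by simp; linarith) (by simp; linarith) (by linarith))
  have hgss : 0 < g (y s + s) := hden s hs0
  have hguu : 0 < g (y u + u) := hden u hu0
  -- step 1: g (y s) / g (y s + s) ≤ g (y s) / g (y s + u)
  have step1 : g (y s) / g (y s + s) ≤ g (y s) / g (y s + u) := by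
    apply div_le_div_of_nonneg_left hg1.le hgsu
    exact hunimodal (by simp; linarith) (by simp; linarith) (by linarith)
  -- step 2 via log concavity
  have key : Real.log (g (y s)) + Real.log (g (y u + u)) ≤
      Real.log (g (y u)) + Real.log (g (y s + u)) :=
    concave_shift hlogconc hyle hu0 hg1 hg2 hgsu hguu
  have step2 : g (y s) / g (y s + u) ≤ g (y u) / g (y u + u) := by
    rw [div_le_div_iff₀ hgsu hguu]
    have hlog : Real.log (g (y s) * g (y u + u)) ≤ Real.log (g (y u) * g (y s + u)) := by
      rw [Real.log_mul hg1.ne' hguu.ne', Real.log_mul hg2.ne' hgsu.ne']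
      linarith
    exact (Real.log_le_log_iff (by positivity) (by positivity)).mp hlog
  linarith
end

section
/- If g is a log-concave probability density on ℝ, then its cumulative distribution function G(x) = ∫_{-∞}^x g and its survival function 1 − G are both log-concave functions. -/
open MeasureTheory Set

/-- Midpoint-concave plus continuous implies concave. -/
private lemma concaveOn_of_cont_midpt {S : Set ℝ} {f : ℝ → ℝ}
    (hS : Convex ℝ S) (hc : ContinuousOn f S)
    (hm : ∀ p ∈ S, ∀ q ∈ S, (f p + f q) / 2 ≤ f ((p + q) / 2)) :
    ConcaveOn ℝ S f := by
  refine ⟨hS, ?_⟩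
  intro x hx y hy a b ha hb hab
  set φ : ℝ → ℝ := fun t => f ((1 - t) * x + t * y) - ((1 - t) * f x + t * f y) with hφdef
  set A : Set ℝ := {t | t ∈ Icc (0:ℝ) 1 ∧ 0 ≤ φ t} with hAdef
  have hseg : ∀ t ∈ Icc (0:ℝ) 1, (1 - t) * x + t * y ∈ S := by
    intro t ht
    have := hS hx hy (by linarith [ht.2] : (0:ℝ) ≤ 1 - t) ht.1 (by ring)
    simpa [smul_eq_mul] using this
  have hlc : Continuous fun t : ℝ => (1 - t) * x + t * y := by continuity
  have hφc : ContinuousOn φ (Icc 0 1) := by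
    apply ContinuousOn.sub
    · exact hc.comp hlc.continuousOn hseg
    · exact (by continuity : Continuous fun t : ℝ => (1 - t) * f x + t * f y).continuousOn
  have hclosed : IsClosed A := by
    have h2 : A = Icc (0:ℝ) 1 ∩ φ ⁻¹' Ici 0 := by
      ext t; simp [hAdef, and_comm]
    rw [h2]
    exact hφc.preimage_isClosed_of_isClosed isClosed_Icc isClosed_Ici
  have h0 : (0:ℝ) ∈ A := by
    constructor
    · exact ⟨le_refl _, zero_le_one⟩
    · simp [hφdef]
  have h1 : (1:ℝ) ∈ A := by
    constructor
    · exact ⟨zero_le_one, le_refl _⟩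
    · simp [hφdef]
  have hmid : ∀ s ∈ A, ∀ t ∈ A, (s + t) / 2 ∈ A := by
    intro s hs t ht
    obtain ⟨⟨hs0, hs1⟩, hsφ⟩ := hs
    obtain ⟨⟨ht0, ht1⟩, htφ⟩ := ht
    refine ⟨⟨by linarith, by linarith⟩, ?_⟩
    have hp := hseg s ⟨hs0, hs1⟩
    have hq := hseg t ⟨ht0, ht1⟩
    have hkey := hm _ hp _ hq
    have hpe : (((1 - s) * x + s * y) + ((1 - t) * x + t * y)) / 2
        = (1 - (s + t) / 2) * x + ((s + t) / 2) * y := by ring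
    rw [hpe] at hkey
    simp only [hφdef] at hsφ htφ ⊢
    linarith
  have hall : Icc (0:ℝ) 1 ⊆ A := by
    intro t ht
    by_contra hnot
    have hne1 : (A ∩ Icc 0 t).Nonempty := ⟨0, h0, le_refl 0, ht.1⟩
    have hbd1 : BddAbove (A ∩ Icc 0 t) := ⟨t, fun z hz => hz.2.2⟩
    have hcl1 : IsClosed (A ∩ Icc 0 t) := hclosed.inter isClosed_Icc
    have haa := hcl1.csSup_mem hne1 hbd1
    set α := sSup (A ∩ Icc 0 t) with hαdef
    have hne2 : (A ∩ Icc t 1).Nonempty := ⟨1, h1, ht.2, le_refl 1⟩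
    have hbd2 : BddBelow (A ∩ Icc t 1) := ⟨t, fun z hz => hz.2.1⟩
    have hcl2 : IsClosed (A ∩ Icc t 1) := hclosed.inter isClosed_Icc
    have hbb := hcl2.csInf_mem hne2 hbd2
    set β := sInf (A ∩ Icc t 1) with hβdef
    have hαt : α < t := lt_of_le_of_ne haa.2.2 (fun h => hnot (h ▸ haa.1))
    have htβ : t < β := lt_of_le_of_ne hbb.2.1 (fun h => hnot (h ▸ hbb.1))
    have hmm := hmid α haa.1 β hbb.1
    rcases le_or_gt ((α + β) / 2) t with hle | hlt
    · have hmem : (α + β) / 2 ∈ A ∩ Icc 0 t := ⟨hmm, ⟨by linarith [haa.1.1.1, hbb.1.1.1], hle⟩⟩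
      have := le_csSup hbd1 hmem
      linarith
    · have hmem : (α + β) / 2 ∈ A ∩ Icc t 1 := ⟨hmm, ⟨hlt.le, by linarith [haa.1.1.2, hbb.1.1.2]⟩⟩
      have := csInf_le hbd2 hmem
      linarith
  have hbmem : b ∈ Icc (0:ℝ) 1 := ⟨hb, by linarith⟩
  have hfin := (hall hbmem).2
  have hae : a = 1 - b := by linarith
  simp only [hφdef] at hfin
  simp only [smul_eq_mul, hae]
  linarith

private lemma two_point {g : ℝ → ℝ} (hnonneg : ∀ x, 0 ≤ g x)
    (hlogconc : ConcaveOn ℝ {x | 0 < g x} (fun x => Real.log (g x))) :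
    ∀ u v d : ℝ, 0 ≤ d → u + d ≤ v → g u * g v ≤ g (u + d) * g (v - d) := by
  intro u v d hd huv
  rcases eq_or_lt_of_le hd with rfl | hd0
  · simp
  rcases (hnonneg u).eq_or_lt with hu | hu
  · rw [← hu, zero_mul]; exact mul_nonneg (hnonneg _) (hnonneg _)
  rcases (hnonneg v).eq_or_lt with hv | hv
  · rw [← hv, mul_zero]; exact mul_nonneg (hnonneg _) (hnonneg _)
  have hvu : 0 < v - u := by linarith
  set θ := d / (v - u) with hθdef
  have hθ0 : 0 < θ := div_pos hd0 hvu
  have hθ1 : θ ≤ 1 := by rw [div_le_one hvu]; linarith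
  have e1 : (1 - θ) * u + θ * v = u + d := by
    rw [hθdef]; field_simp; ring
  have e2 : θ * u + (1 - θ) * v = v - d := by
    rw [hθdef]; field_simp; ring
  have hu' : u ∈ {x | 0 < g x} := hu
  have hv' : v ∈ {x | 0 < g x} := hv
  have hm1 : 0 < g (u + d) := by
    have := hlogconc.1 hu' hv' (by linarith : (0:ℝ) ≤ 1 - θ) hθ0.le (by ring)
    simpa [smul_eq_mul, e1] using this
  have hm2 : 0 < g (v - d) := by
    have := hlogconc.1 hu' hv' hθ0.le (by linarith : (0:ℝ) ≤ 1 - θ) (by ring)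
    simpa [smul_eq_mul, e2] using this
  have h1 := hlogconc.2 hu' hv' (by linarith : (0:ℝ) ≤ 1 - θ) hθ0.le (by ring)
  have h2 := hlogconc.2 hu' hv' hθ0.le (by linarith : (0:ℝ) ≤ 1 - θ) (by ring)
  simp only [smul_eq_mul, e1, e2] at h1 h2
  have hlog : Real.log (g u * g v) ≤ Real.log (g (u + d) * g (v - d)) := by
    rw [Real.log_mul hu.ne' hv.ne', Real.log_mul hm1.ne' hm2.ne']
    linarith
  exact (Real.log_le_log_iff (mul_pos hu hv) (mul_pos hm1 hm2)).mp hlog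

private lemma shift_Iio (g : ℝ → ℝ) (d x : ℝ) :
    ∫ u in Iio x, g (u + d) = ∫ u in Iio (x + d), g u := by
  have h := (measurePreserving_add_right (volume : Measure ℝ) d).setIntegral_preimage_emb
    (MeasurableEquiv.addRight d).measurableEmbedding g (Iio (x + d))
  have hpre : (fun u : ℝ => u + d) ⁻¹' Iio (x + d) = Iio x := by
    ext u; simp
  rw [← hpre]
  exact h

private lemma shift_Ico (g : ℝ → ℝ) (d x y : ℝ) :
    ∫ u in Ico x y, g (u + d) = ∫ u in Ico (x + d) (y + d), g u := by
  have h := (measurePreserving_add_right (volume : Measure ℝ) d).setIntegral_preimage_emb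
    (MeasurableEquiv.addRight d).measurableEmbedding g (Ico (x + d) (y + d))
  have hpre : (fun u : ℝ => u + d) ⁻¹' Ico (x + d) (y + d) = Ico x y := by
    ext u; simp
  rw [← hpre]
  exact h


private lemma G_split {g : ℝ → ℝ} (hintble : Integrable g) {x y : ℝ} (h : x ≤ y) :
    ∫ t in Iio y, g t = (∫ t in Iio x, g t) + ∫ t in Ico x y, g t := by
  rw [← setIntegral_union (by rw [Set.disjoint_left]; intro z hz hz2; exact absurd hz2.1 (not_le.mpr hz))
      measurableSet_Ico hintble.integrableOn hintble.integrableOn, Iio_union_Ico_eq_Iio h]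

private lemma G_cont {g : ℝ → ℝ} (hintble : Integrable g) {G : ℝ → ℝ}
    (hG : ∀ x, G x = ∫ t in Iio x, g t) : Continuous G := by
  have h := hintble.continuous_primitive 0
  have hfe : G = fun x => (∫ t in Iio (0:ℝ), g t) + ∫ t in (0:ℝ)..x, g t := by
    funext x
    rw [hG x]
    rcases le_total (0:ℝ) x with h0 | h0
    · rw [intervalIntegral.integral_of_le h0, G_split hintble h0,
        integral_Ico_eq_integral_Ioo, ← integral_Ioc_eq_integral_Ioo]
    · rw [intervalIntegral.integral_of_ge h0, G_split hintble h0 (x := x) (y := 0),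
        integral_Ico_eq_integral_Ioo, ← integral_Ioc_eq_integral_Ioo]
      ring
  rw [hfe]
  exact continuous_const.add h

private lemma star {g G : ℝ → ℝ} (hnonneg : ∀ x, 0 ≤ g x) (hintble : Integrable g)
    (hlogconc : ConcaveOn ℝ {x | 0 < g x} (fun x => Real.log (g x)))
    (hG : ∀ x, G x = ∫ t in Iio x, g t) {x y s : ℝ}
    (hxy : x ≤ y) (hs : 0 ≤ s) : G x * G (y + s) ≤ G y * G (x + s) := by
  set d := y - x with hddef
  have hd0 : 0 ≤ d := by simp [hddef]; linarith
  set b := ∫ v in Ico y (y + s), g v with hbdef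
  set c := ∫ v in Ico x (x + s), g v with hcdef
  have hgshift : Integrable (fun v : ℝ => g (v - d)) := hintble.comp_sub_right d
  have hgshift2 : Integrable (fun v : ℝ => g (v + d)) := hintble.comp_add_right d
  have stepA : ∀ u, u < x → g u * b ≤ g (u + d) * c := by
    intro u hu
    have h1 : g u * b = ∫ v in Ico y (y + s), g u * g v := (integral_const_mul _ _).symm
    have h2 : (∫ v in Ico y (y + s), g u * g v)
        ≤ ∫ v in Ico y (y + s), g (u + d) * g (v - d) := by
      apply setIntegral_mono_on
      · exact (hintble.integrableOn).const_mul _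
      · exact (hgshift.integrableOn).const_mul _
      · exact measurableSet_Ico
      · intro v hv
        exact two_point hnonneg hlogconc u v d hd0 (by simp only [hddef] at *; linarith [hv.1])
    have h3 : (∫ v in Ico y (y + s), g (u + d) * g (v - d)) = g (u + d) * c := by
      rw [integral_const_mul]
      congr 1
      have hsh := shift_Ico g (-d) y (y + s)
      simp only [← sub_eq_add_neg] at hsh
      rw [hsh, hcdef]
      congr 1 <;> simp [hddef] <;> ring
    linarith
  have stepB : G x * b ≤ G y * c := by
    have h1 : G x * b = ∫ u in Iio x, g u * b := by
      rw [integral_mul_const, hG]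
    have h2 : (∫ u in Iio x, g u * b) ≤ ∫ u in Iio x, g (u + d) * c := by
      apply setIntegral_mono_on
      · exact (hintble.integrableOn).mul_const _
      · exact (hgshift2.integrableOn).mul_const _
      · exact measurableSet_Iio
      · intro u hu
        exact stepA u hu
    have h3 : (∫ u in Iio x, g (u + d) * c) = G y * c := by
      rw [integral_mul_const, shift_Iio, hG]
      congr 2
      simp [hddef]
    linarith
  have hy2 : G (y + s) = G y + b := by
    rw [hG, hG, G_split hintble (by linarith : y ≤ y + s)]
  have hx2 : G (x + s) = G x + c := by
    rw [hG, hG, G_split hintble (by linarith : x ≤ x + s)]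
  rw [hy2, hx2]
  nlinarith [stepB]

private lemma cdf_logconc (g G : ℝ → ℝ) (hnonneg : ∀ x, 0 ≤ g x) (hintble : Integrable g)
    (hlogconc : ConcaveOn ℝ {x | 0 < g x} (fun x => Real.log (g x)))
    (hG : ∀ x, G x = ∫ t in Iio x, g t) :
    ConcaveOn ℝ {x | 0 < G x} (fun x => Real.log (G x)) := by
  have hmono : Monotone G := by
    intro x y hxy
    rw [hG x, hG y, G_split hintble hxy]
    have : 0 ≤ ∫ t in Ico x y, g t :=
      setIntegral_nonneg measurableSet_Ico (fun t _ => hnonneg t)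
    linarith
  have hconv : Convex ℝ {x | 0 < G x} := by
    rw [convex_iff_ordConnected]
    constructor
    intro p hp q _ z hz
    exact lt_of_lt_of_le hp (hmono hz.1)
  have hcont := G_cont hintble hG
  apply concaveOn_of_cont_midpt hconv
  · intro x hx
    exact ((Real.continuousAt_log (ne_of_gt hx)).comp hcont.continuousAt).continuousWithinAt
  · have key : ∀ p ∈ {x | 0 < G x}, ∀ q ∈ {x | 0 < G x}, p ≤ q →
        (Real.log (G p) + Real.log (G q)) / 2 ≤ Real.log (G ((p + q) / 2)) := by
      intro p hp q hq hpq
      have h1 : p ≤ (p + q) / 2 := by linarith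
      have h2 : (0:ℝ) ≤ (q - p) / 2 := by linarith
      have hstar := star hnonneg hintble hlogconc hG h1 h2
      have e1 : (p + q) / 2 + (q - p) / 2 = q := by ring
      have e2 : p + (q - p) / 2 = (p + q) / 2 := by ring
      rw [e1, e2] at hstar
      have hp' : 0 < G p := hp
      have hq' : 0 < G q := hq
      have hmpos : 0 < G ((p + q) / 2) := lt_of_lt_of_le hp' (hmono h1)
      have hlog := (Real.log_le_log_iff (mul_pos hp' hq') (mul_pos hmpos hmpos)).mpr hstar
      rw [Real.log_mul hp'.ne' hq'.ne', Real.log_mul hmpos.ne' hmpos.ne'] at hlog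
      linarith
    intro p hp q hq
    rcases le_total p q with h | h
    · exact key p hp q hq h
    · have := key q hq p hp h
      rw [add_comm (q:ℝ) p] at this
      linarith

theorem stmt_3 (g G : ℝ → ℝ)
    (hnonneg : ∀ x, 0 ≤ g x)
    (hintble : Integrable g)
    (hint : ∫ x, g x = 1)
    (hlogconc : ConcaveOn ℝ {x | 0 < g x} (fun x => Real.log (g x)))
    (hG : ∀ x, G x = ∫ t in Set.Iio x, g t) :
    ConcaveOn ℝ {x | 0 < G x} (fun x => Real.log (G x)) ∧
      ConcaveOn ℝ {x | G x < 1} (fun x => Real.log (1 - G x)) := by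
  have part1 := cdf_logconc g G hnonneg hintble hlogconc hG
  -- reflection
  set g' : ℝ → ℝ := fun t => g (-t) with hg'def
  set G' : ℝ → ℝ := fun x => 1 - G (-x) with hG'def
  have hnonneg' : ∀ x, 0 ≤ g' x := fun x => hnonneg _
  have hintble' : Integrable g' := hintble.comp_neg
  have hG'eq : ∀ x, G' x = ∫ t in Iio x, g' t := by
    intro x
    have h1 : (∫ t in Iio (-x), g t) + ∫ t in Ici (-x), g t = ∫ t, g t :=
      intervalIntegral.integral_Iio_add_Ici hintble.integrableOn hintble.integrableOn
    have h2 : (∫ t in Ici (-x), g t) = ∫ t in Ioi (-x), g t := integral_Ici_eq_integral_Ioi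
    have h3 : (∫ t in Iic x, g (-t)) = ∫ t in Ioi (-x), g t := integral_comp_neg_Iic x g
    have h4 : (∫ t in Iic x, g (-t)) = ∫ t in Iio x, g (-t) := integral_Iic_eq_integral_Iio
    simp only [hG'def, hg'def, hG]
    rw [hint] at h1
    linarith
  have hmemneg : ∀ (a b p q : ℝ), a • (-p) + b • (-q) = -(a • p + b • q) := by
    intros a b p q; simp only [smul_eq_mul]; ring
  have hlogconc' : ConcaveOn ℝ {x | 0 < g' x} (fun x => Real.log (g' x)) := by
    constructor
    · intro p hp q hq a b ha hb hab
      have h := hlogconc.1 (show (-p) ∈ {x | 0 < g x} from hp)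
        (show (-q) ∈ {x | 0 < g x} from hq) ha hb hab
      rw [hmemneg] at h
      exact h
    · intro p hp q hq a b ha hb hab
      have h := hlogconc.2 (show (-p) ∈ {x | 0 < g x} from hp)
        (show (-q) ∈ {x | 0 < g x} from hq) ha hb hab
      rw [hmemneg] at h
      exact h
  have part2' := cdf_logconc g' G' hnonneg' hintble' hlogconc' hG'eq
  refine ⟨part1, ?_, ?_⟩
  · intro p hp q hq a b ha hb hab
    have hp' : (-p) ∈ {x | 0 < G' x} := by
      show 0 < 1 - G (-(-p)); rw [neg_neg]; simp only [mem_setOf_eq] at hp; linarith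
    have hq' : (-q) ∈ {x | 0 < G' x} := by
      show 0 < 1 - G (-(-q)); rw [neg_neg]; simp only [mem_setOf_eq] at hq; linarith
    have h := part2'.1 hp' hq' ha hb hab
    rw [hmemneg] at h
    have h2 : 0 < 1 - G (-(-(a • p + b • q))) := h
    rw [neg_neg] at h2
    show G (a • p + b • q) < 1
    linarith
  · intro p hp q hq a b ha hb hab
    have hp' : (-p) ∈ {x | 0 < G' x} := by
      show 0 < 1 - G (-(-p)); rw [neg_neg]; simp only [mem_setOf_eq] at hp; linarith
    have hq' : (-q) ∈ {x | 0 < G' x} := by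
      show 0 < 1 - G (-(-q)); rw [neg_neg]; simp only [mem_setOf_eq] at hq; linarith
    have h := part2'.2 hp' hq' ha hb hab
    rw [hmemneg] at h
    have h2 : a • Real.log (1 - G (-(-p))) + b • Real.log (1 - G (-(-q)))
        ≤ Real.log (1 - G (-(-(a • p + b • q)))) := h
    rw [neg_neg, neg_neg, neg_neg] at h2
    exact h2
end

section
/- Let g be a probability density on ℝ that is symmetric about 0, unimodal at 0, and log-concave, with survival function Ḡ = 1 − G. Then for all z ≥ 0 (with g(2z) > 0), g(z)/g(2z) ≥ 1/(2Ḡ(z)) − 1. -/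
open MeasureTheory Set

lemma my_pointwise (g : ℝ → ℝ)
    (hunimodal : AntitoneOn g (Set.Ici 0))
    (hlogconc : ConcaveOn ℝ {x | 0 < g x} (fun x => Real.log (g x)))
    (z s : ℝ) (hs0 : 0 ≤ s) (hsz : s ≤ z) (hgz : 0 < g (2 * z)) :
    g (2 * z) * g s ≤ g z * g (z + s) := by
  rcases eq_or_lt_of_le (le_trans hs0 hsz) with hz0 | hz0
  · have hs : s = 0 := le_antisymm (hz0 ▸ hsz) hs0
    subst hs
    rw [← hz0]
    ring_nf
    exact le_rfl
  -- z > 0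
  have hpos : ∀ x : ℝ, 0 ≤ x → x ≤ 2 * z → 0 < g x := fun x hx0 hx2 =>
    lt_of_lt_of_le hgz (hunimodal (mem_Ici.mpr hx0) (mem_Ici.mpr (by linarith)) hx2)
  have hgs : 0 < g s := hpos s hs0 (by linarith)
  have hgzp : 0 < g z := hpos z (le_of_lt hz0) (by linarith)
  have hgzs : 0 < g (z + s) := hpos (z + s) (by linarith) (by linarith)
  have hd : (0:ℝ) < 2 * z - s := by linarith
  set a : ℝ := z / (2 * z - s) with ha
  have ha0 : 0 ≤ a := le_of_lt (div_pos hz0 hd)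
  have ha1 : a ≤ 1 := by
    rw [ha, div_le_one hd]; linarith
  have haz : a * (2 * z - s) = z := div_mul_cancel₀ z (ne_of_gt hd)
  have hmem_s : s ∈ {x | 0 < g x} := hgs
  have hmem_2z : (2 * z) ∈ {x | 0 < g x} := hgz
  have h1 := hlogconc.2 hmem_s hmem_2z ha0 (by linarith : (0:ℝ) ≤ 1 - a) (by ring)
  have h2 := hlogconc.2 hmem_s hmem_2z (by linarith : (0:ℝ) ≤ 1 - a) ha0 (by ring)
  have e1 : a • s + (1 - a) • (2 * z) = z := by
    simp only [smul_eq_mul]; nlinarith [haz]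
  have e2 : (1 - a) • s + a • (2 * z) = z + s := by
    simp only [smul_eq_mul]; nlinarith [haz]
  rw [e1] at h1
  rw [e2] at h2
  simp only [smul_eq_mul] at h1 h2
  have hsum : Real.log (g s) + Real.log (g (2 * z)) ≤ Real.log (g z) + Real.log (g (z + s)) := by
    linarith
  rw [← Real.log_mul (ne_of_gt hgs) (ne_of_gt hgz), ← Real.log_mul (ne_of_gt hgzp) (ne_of_gt hgzs)] at hsum
  have := (Real.log_le_log_iff (by positivity) (by positivity)).mp hsum
  linarith [this]

theorem stmt_5 (g G : ℝ → ℝ)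
    (hnonneg : ∀ x, 0 ≤ g x)
    (hintble : Integrable g)
    (hint : ∫ x, g x = 1)
    (hsym : ∀ x, g (-x) = g x)
    (hunimodal : AntitoneOn g (Set.Ici 0))
    (hlogconc : ConcaveOn ℝ {x | 0 < g x} (fun x => Real.log (g x)))
    (hG : ∀ x, G x = ∫ t in Set.Iio x, g t)
    (z : ℝ) (hz : 0 ≤ z) (hgz : 0 < g (2 * z)) (hGz : 0 < 1 - G z) :
    g z / g (2 * z) ≥ 1 / (2 * (1 - G z)) - 1 := by
  -- half mass below 0
  have hIic0 : ∫ x in Iic (0:ℝ), g x = 1/2 := by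
    have hs : ∫ x in Ioi (0:ℝ), g x = ∫ x in Iic (0:ℝ), g x := by
      have h := integral_comp_neg_Ioi (0:ℝ) g
      simp only [hsym, neg_zero] at h
      exact h
    have hsum : (∫ x in Iic (0:ℝ), g x) + ∫ x in Ioi (0:ℝ), g x = 1 := by
      rw [intervalIntegral.integral_Iic_add_Ioi hintble.integrableOn hintble.integrableOn, hint]
    linarith
  -- 1 - G z = tail
  have htail : 1 - G z = ∫ x in Ioi z, g x := by
    have := intervalIntegral.integral_Iio_add_Ici (b := z) hintble.integrableOn hintble.integrableOn
    rw [hint, integral_Ici_eq_integral_Ioi] at this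
    rw [hG]; linarith
  have htailpos : 0 < ∫ x in Ioi z, g x := htail ▸ hGz
  -- G z - 1/2 = ∫ in 0..z
  have hmid : ∫ s in (0:ℝ)..z, g s = G z - 1/2 := by
    rw [intervalIntegral.integral_of_le hz]
    have hsplit : (∫ x in Iic (0:ℝ), g x) + ∫ x in Ioc (0:ℝ) z, g x = ∫ x in Iic z, g x := by
      rw [← setIntegral_union (Iic_disjoint_Ioc le_rfl) measurableSet_Ioc
        hintble.integrableOn hintble.integrableOn, Iic_union_Ioc_eq_Iic hz]
    rw [hG, ← integral_Iic_eq_integral_Iio]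
    linarith
  -- key integral inequality
  have hptwise : ∀ s ∈ Icc (0:ℝ) z, g (2 * z) * g s ≤ g z * g (z + s) := fun s hs =>
    my_pointwise g hunimodal hlogconc z s hs.1 hs.2 hgz
  have hint1 : IntervalIntegrable (fun s => g (2 * z) * g s) volume 0 z :=
    (hintble.const_mul _).intervalIntegrable
  have hint2 : IntervalIntegrable (fun s => g z * g (z + s)) volume 0 z :=
    ((hintble.comp_add_left z).const_mul _).intervalIntegrable
  have hkey : g (2 * z) * ∫ s in (0:ℝ)..z, g s ≤ g z * ∫ x in Ioi z, g x := by
    calc g (2 * z) * ∫ s in (0:ℝ)..z, g s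
        = ∫ s in (0:ℝ)..z, g (2 * z) * g s := (intervalIntegral.integral_const_mul _ _).symm
      _ ≤ ∫ s in (0:ℝ)..z, g z * g (z + s) :=
          intervalIntegral.integral_mono_on hz hint1 hint2 hptwise
      _ = g z * ∫ s in (0:ℝ)..z, g (z + s) := intervalIntegral.integral_const_mul _ _
      _ = g z * ∫ s in z..(z + z), g s := by
          rw [intervalIntegral.integral_comp_add_left g z]; ring_nf
      _ ≤ g z * ∫ x in Ioi z, g x := by
          apply mul_le_mul_of_nonneg_left _ (hnonneg z)
          rw [intervalIntegral.integral_of_le (by linarith : z ≤ z + z)]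
          exact setIntegral_mono_set hintble.integrableOn
            (Filter.Eventually.of_forall fun x => hnonneg x)
            (HasSubset.Subset.eventuallyLE Ioc_subset_Ioi_self)
  rw [hmid, ← htail] at hkey
  -- final algebra
  set T := 1 - G z with hT
  have hGz2 : G z - 1/2 = 1/2 - T := by rw [hT]; ring
  rw [hGz2] at hkey
  rw [ge_iff_le, sub_le_iff_le_add, div_add' _ _ _ (ne_of_gt hgz),
    div_le_div_iff₀ (by positivity) hgz]
  nlinarith [hkey, hnonneg z, hGz]
end

section
/- Let g be a probability density on ℝ that is symmetric about 0, unimodal at 0, and log-concave, with survival function Ḡ = 1 − G. Then for all z ≥ 0 with Ḡ(2z) > 0, Ḡ(z)/Ḡ(2z) ≥ 1/(2Ḡ(z)) − 1. -/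
open MeasureTheory Set

theorem stmt_6 (g G : ℝ → ℝ)
    (hnonneg : ∀ x, 0 ≤ g x)
    (hintble : Integrable g)
    (hint : ∫ x, g x = 1)
    (hsym : ∀ x, g (-x) = g x)
    (hunimodal : AntitoneOn g (Set.Ici 0))
    (hlogconc : ConcaveOn ℝ {x | 0 < g x} (fun x => Real.log (g x)))
    (hG : ∀ x, G x = ∫ t in Set.Iio x, g t)
    (z : ℝ) (hz : 0 ≤ z) (hGz2 : 0 < 1 - G (2 * z)) (hGz : 0 < 1 - G z) :
    (1 - G z) / (1 - G (2 * z)) ≥ 1 / (2 * (1 - G z)) - 1 := by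
  -- tail integrals
  have htail : ∀ c : ℝ, ∫ t in Ici c, g t = 1 - G c := by
    intro c
    have h := integral_add_compl (measurableSet_Iio (a := c)) hintble
    rw [compl_Iio] at h
    rw [hG c]
    linarith [h.trans hint]
  -- shifted tail integrals
  have hshift : ∀ c : ℝ, ∫ t in Ici (0:ℝ), g (c + t) = 1 - G c := by
    intro c
    rw [← htail c]
    rw [← integral_indicator measurableSet_Ici, ← integral_indicator measurableSet_Ici]
    have key : ∀ x : ℝ, (Ici (0:ℝ)).indicator (fun t => g (c + t)) x
        = (Ici c).indicator g (c + x) := by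
      intro x
      simp [Set.indicator_apply, Set.mem_Ici]
    rw [funext key]
    exact integral_add_left_eq_self ((Ici c).indicator g) c
  -- increments of G
  have hinc : ∀ a b : ℝ, a ≤ b → ∫ t in Ico a b, g t = G b - G a := by
    intro a b hab
    have hunion : Iio a ∪ Ico a b = Iio b := by
      ext x
      simp only [mem_union, mem_Iio, mem_Ico]
      constructor
      · rintro (h | ⟨h1, h2⟩) <;> linarith
      · intro h
        by_cases hx : x < a
        · exact Or.inl hx
        · exact Or.inr ⟨le_of_not_gt hx, h⟩
    have hdisj : Disjoint (Iio a) (Ico a b) := by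
      rw [Set.disjoint_left]
      intro x hx hx'
      exact absurd hx'.1 (not_le.2 hx)
    have := setIntegral_union hdisj measurableSet_Ico
      hintble.integrableOn (f := g) (μ := volume) hintble.integrableOn
    rw [hunion] at this
    rw [hG a, hG b, this]
    ring
  -- integral of g(z - s) over Icc 0 z
  have hE1 : ∫ s in Icc 0 z, g (z - s) = G z - G 0 := by
    rw [integral_Icc_eq_integral_Ioc, ← intervalIntegral.integral_of_le hz,
      intervalIntegral.integral_comp_sub_left g z]
    simp only [sub_self, sub_zero]
    rw [intervalIntegral.integral_of_le hz, integral_Ioc_eq_integral_Ioo,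
      ← integral_Ico_eq_integral_Ioo, hinc 0 z hz]
  have hE3 : ∫ s in Icc 0 z, g (2 * z - s) = G (2 * z) - G z := by
    rw [integral_Icc_eq_integral_Ioc, ← intervalIntegral.integral_of_le hz,
      intervalIntegral.integral_comp_sub_left g (2 * z)]
    have h2 : 2 * z - z = z := by ring
    rw [h2, sub_zero, intervalIntegral.integral_of_le (by linarith : z ≤ 2 * z),
      integral_Ioc_eq_integral_Ioo, ← integral_Ico_eq_integral_Ioo,
      hinc z (2 * z) (by linarith)]
  -- pointwise log-concavity inequality
  have hkey : ∀ s ∈ Icc (0:ℝ) z, ∀ t ∈ Ici (0:ℝ),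
      g (z - s) * g (2 * z + t) ≤ g (2 * z - s) * g (z + t) := by
    intro s hs t ht
    obtain ⟨hs0, hsz⟩ := hs
    rw [mem_Ici] at ht
    by_cases hA : g (z - s) = 0
    · rw [hA, zero_mul]; exact mul_nonneg (hnonneg _) (hnonneg _)
    by_cases hB : g (2 * z + t) = 0
    · rw [hB, mul_zero]; exact mul_nonneg (hnonneg _) (hnonneg _)
    have hApos : 0 < g (z - s) := lt_of_le_of_ne (hnonneg _) (Ne.symm hA)
    have hBpos : 0 < g (2 * z + t) := lt_of_le_of_ne (hnonneg _) (Ne.symm hB)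
    have hpos : ∀ x : ℝ, 0 ≤ x → x ≤ 2 * z + t → 0 < g x := by
      intro x hx hx'
      exact lt_of_lt_of_le hBpos (hunimodal (mem_Ici.2 hx) (mem_Ici.2 (by linarith)) hx')
    rcases eq_or_lt_of_le (by linarith : (0:ℝ) ≤ z + s + t) with hD | hD
    · have hz0 : z = 0 := by linarith
      have hs0' : s = 0 := by linarith
      have ht0 : t = 0 := by linarith
      simp [hz0, hs0', ht0, mul_comm]
    · set D := z + s + t with hDdef
      have hDne : D ≠ 0 := ne_of_gt hD
      have hAmem : (z - s) ∈ {x | 0 < g x} := hApos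
      have hBmem : (2 * z + t) ∈ {x | 0 < g x} := hBpos
      have hw1 : (0:ℝ) ≤ z / D := by positivity
      have hw2 : (0:ℝ) ≤ (s + t) / D := div_nonneg (by linarith) hD.le
      have hsum1 : z / D + (s + t) / D = 1 := by field_simp; linarith
      have hsum2 : (s + t) / D + z / D = 1 := by field_simp; linarith
      have h1 := hlogconc.2 hAmem hBmem hw1 hw2 hsum1
      have h2 := hlogconc.2 hAmem hBmem hw2 hw1 hsum2
      have hc1 : (z / D) • (z - s) + ((s + t) / D) • (2 * z + t) = z + t := by
        simp only [smul_eq_mul]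
        field_simp
        ring
      have hc2 : ((s + t) / D) • (z - s) + (z / D) • (2 * z + t) = 2 * z - s := by
        simp only [smul_eq_mul]
        field_simp
        ring
      rw [hc1] at h1
      rw [hc2] at h2
      simp only [smul_eq_mul] at h1 h2
      have hP1 : 0 < g (z + t) := hpos _ (by linarith) (by linarith)
      have hP2 : 0 < g (2 * z - s) := hpos _ (by linarith) (by linarith)
      have hlog : Real.log (g (z - s)) + Real.log (g (2 * z + t))
          ≤ Real.log (g (2 * z - s)) + Real.log (g (z + t)) := by
        have e1 : z / D * Real.log (g (z - s)) + (s + t) / D * Real.log (g (z - s))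
            = Real.log (g (z - s)) := by rw [← add_mul, hsum1, one_mul]
        have e2 : (s + t) / D * Real.log (g (2 * z + t)) + z / D * Real.log (g (2 * z + t))
            = Real.log (g (2 * z + t)) := by rw [← add_mul, hsum2, one_mul]
        linarith
      have hh : Real.log (g (z - s) * g (2 * z + t)) ≤ Real.log (g (2 * z - s) * g (z + t)) := by
        rw [Real.log_mul hApos.ne' hBpos.ne', Real.log_mul hP2.ne' hP1.ne']
        exact hlog
      exact (Real.log_le_log_iff (mul_pos hApos hBpos) (mul_pos hP2 hP1)).1 hh
  -- integrabilities
  have i1 : IntegrableOn (fun s => g (z - s)) (Icc 0 z) volume :=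
    (hintble.comp_sub_left z).integrableOn
  have i2 : IntegrableOn (fun t => g (2 * z + t)) (Ici 0) volume :=
    (hintble.comp_add_left (2 * z)).integrableOn
  have i3 : IntegrableOn (fun s => g (2 * z - s)) (Icc 0 z) volume :=
    (hintble.comp_sub_left (2 * z)).integrableOn
  have i4 : IntegrableOn (fun t => g (z + t)) (Ici 0) volume :=
    (hintble.comp_add_left z).integrableOn
  -- product integrability
  have I12 : IntegrableOn (fun p : ℝ × ℝ => g (z - p.1) * g (2 * z + p.2))
      ((Icc 0 z) ×ˢ (Ici 0)) (volume.prod volume) := by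
    rw [IntegrableOn, ← Measure.prod_restrict]
    exact i1.mul_prod i2
  have I34 : IntegrableOn (fun p : ℝ × ℝ => g (2 * z - p.1) * g (z + p.2))
      ((Icc 0 z) ×ˢ (Ici 0)) (volume.prod volume) := by
    rw [IntegrableOn, ← Measure.prod_restrict]
    exact i3.mul_prod i4
  -- the double integral comparison
  have hmono : ∫ p in (Icc 0 z) ×ˢ (Ici 0), g (z - p.1) * g (2 * z + p.2) ∂(volume.prod volume)
      ≤ ∫ p in (Icc 0 z) ×ˢ (Ici 0), g (2 * z - p.1) * g (z + p.2) ∂(volume.prod volume) := by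
    apply setIntegral_mono_on I12 I34 (measurableSet_Icc.prod measurableSet_Ici)
    rintro ⟨s, t⟩ ⟨hs, ht⟩
    exact hkey s hs t ht
  rw [setIntegral_prod_mul (μ := volume) (ν := volume) (fun s => g (z - s))
      (fun t => g (2 * z + t)),
    setIntegral_prod_mul (μ := volume) (ν := volume) (fun s => g (2 * z - s))
      (fun t => g (z + t))] at hmono
  rw [hE1, hE3, hshift (2 * z), hshift z] at hmono
  -- G 0 = 1/2 by symmetry
  have hG0 : G 0 = 1 / 2 := by
    have hrefl : ∫ t in Iio (0:ℝ), g t = ∫ t in Ioi (0:ℝ), g t := by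
      rw [← integral_indicator measurableSet_Iio, ← integral_indicator measurableSet_Ioi]
      rw [← integral_neg_eq_self ((Iio (0:ℝ)).indicator g) volume]
      congr 1
      funext x
      by_cases hx : 0 < x
      · simp [Set.indicator_apply, hx, not_lt.2 hx.le, neg_lt_zero, hsym]
      · simp [Set.indicator_apply, hx, neg_lt_zero, not_lt.1 hx, Set.mem_Iio]
    have hIciIoi : ∫ t in Ici (0:ℝ), g t = ∫ t in Ioi (0:ℝ), g t :=
      integral_Ici_eq_integral_Ioi
    have h1 := htail 0
    rw [hIciIoi, ← hrefl, ← hG 0] at h1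
    linarith
  -- algebra
  set a := 1 - G z with ha
  set b := 1 - G (2 * z) with hb
  have hab : (G z - G 0) * b ≤ (G (2 * z) - G z) * a := hmono
  have hGz' : G z = 1 - a := by rw [ha]; ring
  have hGz2' : G (2 * z) = 1 - b := by rw [hb]; ring
  rw [hGz', hGz2', hG0] at hab
  have hb2a : b ≤ 2 * a ^ 2 := by nlinarith
  have h1 : 1 / (2 * a) ≤ a / b := by
    rw [div_le_div_iff₀ (by positivity) hGz2]
    nlinarith
  have h2 : 1 / (2 * a) - 1 ≤ 1 / (2 * a) := by linarith
  linarith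
end

section
/- Let g be a density symmetric about 0 and unimodal at 0, with continuous strictly increasing CDF G. For 0 < α < 1 define l(x) = x − G⁻¹(1/2 + ((1−α)/2)·G(x)) for x > d₀ and l(x) = 0 for x ≤ d₀, where d₀ = G⁻¹(1/(1+α)). Then l is nondecreasing on ℝ. -/
open MeasureTheory Set

theorem stmt_7 (g G Ginv : ℝ → ℝ) (α d₀ : ℝ) (l : ℝ → ℝ)
    (hnonneg : ∀ x, 0 ≤ g x)
    (hint : ∫ x, g x = 1)
    (hsym : ∀ x, g (-x) = g x)
    (hunimodal : AntitoneOn g (Set.Ici 0))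
    (hG : ∀ x, G x = ∫ t in Set.Iio x, g t)
    (hGmono : StrictMono G)
    (hGcont : Continuous G)
    (hGinvL : ∀ x, Ginv (G x) = x)
    (hGinvR : ∀ t ∈ Set.Ioo (0:ℝ) 1, G (Ginv t) = t)
    (hα : α ∈ Set.Ioo (0:ℝ) 1)
    (hd₀ : d₀ = Ginv (1 / (1 + α)))
    (hl : ∀ x, l x = if x ≤ d₀ then 0 else x - Ginv (1 / 2 + (1 - α) / 2 * G x)) :
    Monotone l := by
  obtain ⟨hα0, hα1⟩ := hα
  -- g is integrable
  have hgint : Integrable g := by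
    by_contra h
    rw [MeasureTheory.integral_undef h] at hint
    norm_num at hint
  -- bounds on G
  have hGle1 : ∀ x, G x ≤ 1 := by
    intro x
    rw [hG x, ← hint]
    exact setIntegral_le_integral hgint (Filter.Eventually.of_forall hnonneg)
  have hGnn : ∀ x, 0 ≤ G x := by
    intro x
    rw [hG x]
    exact setIntegral_nonneg measurableSet_Iio fun t _ => hnonneg t
  -- G 0 = 1/2
  have hG0 : G 0 = 1 / 2 := by
    have h1 : G 0 = ∫ t in Iic (0:ℝ), g t := by
      rw [hG 0, integral_Iic_eq_integral_Iio]
    have h2 : ∫ t in Iic (0:ℝ), g t = ∫ t in Ioi (0:ℝ), g t := by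
      rw [show (Ioi (0:ℝ)) = Ioi (-0) by norm_num, ← integral_comp_neg_Iic]
      simp only [hsym]
    have h3 : (∫ t in Iic (0:ℝ), g t) + ∫ t in Ioi (0:ℝ), g t = 1 := by
      rw [← hint, ← compl_Iic]
      exact integral_add_compl measurableSet_Iic hgint
    linarith [h1, h2, h3]
  -- membership of 1/(1+α)
  have hmem : (1 / (1 + α)) ∈ Ioo (0:ℝ) 1 := by
    constructor
    · positivity
    · rw [div_lt_one (by linarith)]; linarith
  have hGd₀ : G d₀ = 1 / (1 + α) := by rw [hd₀]; exact hGinvR _ hmem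
  have hd₀pos : 0 < d₀ := by
    have : G 0 < G d₀ := by
      rw [hG0, hGd₀]
      rw [lt_div_iff₀ (by linarith)]
      nlinarith
    exact hGmono.lt_iff_lt.mp this
  -- u x ∈ Ioo 0 1
  have humem : ∀ x, (1 / 2 + (1 - α) / 2 * G x) ∈ Ioo (0:ℝ) 1 := by
    intro x
    have h1 := hGnn x
    have h2 := hGle1 x
    constructor <;> nlinarith
  -- G (Ginv (u x)) = u x
  have hGu : ∀ x, G (Ginv (1 / 2 + (1 - α) / 2 * G x)) = 1 / 2 + (1 - α) / 2 * G x :=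
    fun x => hGinvR _ (humem x)
  -- for x > d₀, Ginv (u x) < x and Ginv (u x) > d₀
  have hkey : ∀ x, d₀ < x → d₀ < Ginv (1 / 2 + (1 - α) / 2 * G x) ∧
      Ginv (1 / 2 + (1 - α) / 2 * G x) < x := by
    intro x hx
    have hGx : 1 / (1 + α) < G x := hGd₀ ▸ hGmono hx
    have hGx' : 1 < G x * (1 + α) := (div_lt_iff₀ (by linarith)).mp hGx
    constructor
    · apply hGmono.lt_iff_lt.mp
      rw [hGu x, hGd₀]
      rw [div_lt_iff₀ (by linarith)]
      nlinarith
    · apply hGmono.lt_iff_lt.mp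
      rw [hGu x]
      nlinarith
  -- interval integral identity
  have hivi : ∀ p q : ℝ, (∫ t in p..q, g t) = G q - G p := by
    intro p q
    rw [hG p, hG q, ← integral_Iic_eq_integral_Iio, ← integral_Iic_eq_integral_Iio]
    exact (intervalIntegral.integral_Iic_sub_Iic hgint.integrableOn hgint.integrableOn).symm
  -- main step: for d₀ < x < y, (Ginv (u y)) - (Ginv (u x)) ≤ y - x
  have hmain : ∀ x y, d₀ < x → x < y →
      Ginv (1 / 2 + (1 - α) / 2 * G y) - Ginv (1 / 2 + (1 - α) / 2 * G x) ≤ y - x := by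
    intro x y hdx hxy
    set a := Ginv (1 / 2 + (1 - α) / 2 * G x) with ha
    set b := Ginv (1 / 2 + (1 - α) / 2 * G y) with hb
    obtain ⟨hda, hax⟩ := hkey x hdx
    obtain ⟨hdb, hby⟩ := hkey y (hdx.trans hxy)
    have ha0 : 0 < a := hd₀pos.trans hda
    have hGxy : G x < G y := hGmono hxy
    have hab : a < b := by
      apply hGmono.lt_iff_lt.mp
      rw [hGu x, hGu y]
      nlinarith
    by_contra hcon
    push_neg at hcon
    -- then y - x < b - a
    have h1 : (∫ t in x..y, g t) = G y - G x := hivi x y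
    have h2 : (∫ t in a..b, g t) = (1 - α) / 2 * (G y - G x) := by
      rw [hivi a b, hGu x, hGu y]; ring
    have h3 : (∫ t in x..y, g t) = ∫ t in a..(a + (y - x)), g (t + (x - a)) := by
      rw [intervalIntegral.integral_comp_add_right,
        show a + (x - a) = x from by ring, show a + (y - x) + (x - a) = y from by ring]
    have hgiv : ∀ p q : ℝ, IntervalIntegrable g volume p q :=
      fun p q => hgint.intervalIntegrable
    have h4 : (∫ t in a..(a + (y - x)), g (t + (x - a))) ≤ ∫ t in a..(a + (y - x)), g t := by
      apply intervalIntegral.integral_mono_on (by linarith)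
      · exact (hgint.comp_add_right (x - a)).intervalIntegrable
      · exact hgiv _ _
      · intro t ht
        obtain ⟨hta, _⟩ := ht
        exact hunimodal (by simp; linarith) (by simp; linarith) (by linarith)
    have h5 : (∫ t in a..(a + (y - x)), g t) ≤ ∫ t in a..b, g t := by
      apply intervalIntegral.integral_mono_interval le_rfl (by linarith) (by linarith)
      · exact Filter.Eventually.of_forall fun t => hnonneg t
      · exact hgiv _ _
    nlinarith
  -- put everything together
  intro x y hxy
  rw [hl x, hl y]
  rcases le_or_gt y d₀ with hyd | hyd
  · rw [if_pos (hxy.trans hyd), if_pos hyd]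
  · rw [if_neg (not_le.mpr hyd)]
    rcases le_or_gt x d₀ with hxd | hxd
    · rw [if_pos hxd]
      have := (hkey y hyd).2
      linarith
    · rw [if_neg (not_le.mpr hxd)]
      rcases eq_or_lt_of_le hxy with rfl | hlt
      · exact le_rfl
      · have := hmain x y hxd hlt
        linarith
end

section
/- Let g be a density symmetric about 0, unimodal at 0, and log-concave, with strictly increasing continuous CDF G. For α ∈ (0,1) and d₀ = G⁻¹(1/(1+α)), the function u(x) = x − G⁻¹(α·G(x)) is nondecreasing on (−∞, d₀]. Equivalently, for x ≤ d₀, u(x) is the (1−α)-quantile of the posterior density θ ↦ g(θ−x)/G(x) on [0,∞), and these quantiles are nondecreasing in x. -/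
open MeasureTheory Set

/-- Four-point inequality from log-concavity: if `c ≤ a ≤ d` and `c + d = a + b`
then `g c * g d ≤ g a * g b`. -/
lemma four_point_logconcave (g : ℝ → ℝ) (hnonneg : ∀ x, 0 ≤ g x)
    (hlogconc : ConcaveOn ℝ {x | 0 < g x} (fun x => Real.log (g x)))
    {c a b d : ℝ} (hca : c ≤ a) (had : a ≤ d) (hsum : c + d = a + b) :
    g c * g d ≤ g a * g b := by
  rcases eq_or_lt_of_le (hca.trans had) with hcd | hcd
  · have hac : a = c := le_antisymm (hcd ▸ had) hca
    have hbc : b = c := by linarith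
    rw [hac, hbc, ← hcd]
  · by_cases hc0 : g c = 0
    · rw [hc0, zero_mul]; exact mul_nonneg (hnonneg a) (hnonneg b)
    by_cases hd0 : g d = 0
    · rw [hd0, mul_zero]; exact mul_nonneg (hnonneg a) (hnonneg b)
    have hcpos : c ∈ {x | 0 < g x} := (hnonneg c).lt_of_ne (Ne.symm hc0)
    have hdpos : d ∈ {x | 0 < g x} := (hnonneg d).lt_of_ne (Ne.symm hd0)
    have hdc : (0:ℝ) < d - c := by linarith
    set l : ℝ := (d - a) / (d - c) with hl_def
    set m : ℝ := (a - c) / (d - c) with hm_def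
    have hl : 0 ≤ l := div_nonneg (by linarith) hdc.le
    have hm : 0 ≤ m := div_nonneg (by linarith) hdc.le
    have hlm : l + m = 1 := by
      rw [hl_def, hm_def, ← add_div]
      field_simp
      ring
    have hmla : m + l = 1 := by linarith
    have ha_eq : l • c + m • d = a := by
      simp only [smul_eq_mul, hl_def, hm_def]; field_simp; ring
    have hb_eq : m • c + l • d = b := by
      simp only [smul_eq_mul, hl_def, hm_def]; field_simp; nlinarith [hsum]
    have haS : a ∈ {x | 0 < g x} := ha_eq ▸ hlogconc.1 hcpos hdpos hl hm hlm
    have hbS : b ∈ {x | 0 < g x} := hb_eq ▸ hlogconc.1 hcpos hdpos hm hl hmla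
    have h1 := hlogconc.2 hcpos hdpos hl hm hlm
    have h2 := hlogconc.2 hcpos hdpos hm hl hmla
    rw [ha_eq] at h1
    rw [hb_eq] at h2
    have hlog : Real.log (g c) + Real.log (g d) ≤ Real.log (g a) + Real.log (g b) := by
      simp only [smul_eq_mul] at h1 h2
      have heq : l * Real.log (g c) + m * Real.log (g d) +
          (m * Real.log (g c) + l * Real.log (g d)) =
          Real.log (g c) + Real.log (g d) := by
        linear_combination (Real.log (g c) + Real.log (g d)) * hlm
      linarith [h1, h2, heq]
    calc g c * g d = Real.exp (Real.log (g c) + Real.log (g d)) := by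
          rw [Real.exp_add, Real.exp_log hcpos, Real.exp_log hdpos]
      _ ≤ Real.exp (Real.log (g a) + Real.log (g b)) := Real.exp_le_exp.2 hlog
      _ = g a * g b := by rw [Real.exp_add, Real.exp_log haS, Real.exp_log hbS]

theorem stmt_8 (g G Ginv : ℝ → ℝ) (α d₀ : ℝ)
    (hnonneg : ∀ x, 0 ≤ g x)
    (hint : ∫ x, g x = 1)
    (hsym : ∀ x, g (-x) = g x)
    (hunimodal : AntitoneOn g (Set.Ici 0))
    (hlogconc : ConcaveOn ℝ {x | 0 < g x} (fun x => Real.log (g x)))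
    (hG : ∀ x, G x = ∫ t in Set.Iio x, g t)
    (hGmono : StrictMono G)
    (hGcont : Continuous G)
    (hGinvL : ∀ x, Ginv (G x) = x)
    (hGinvR : ∀ t ∈ Set.Ioo (0:ℝ) 1, G (Ginv t) = t)
    (hα : α ∈ Set.Ioo (0:ℝ) 1)
    (hd₀ : d₀ = Ginv (1 / (1 + α))) :
    MonotoneOn (fun x => x - Ginv (α * G x)) (Set.Iic d₀) := by
  obtain ⟨hα0, hα1⟩ := hα
  -- g is integrable
  have hg_int : Integrable g := by
    by_contra h
    rw [integral_undef h] at hint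
    norm_num at hint
  -- translation of set integrals
  have htrans : ∀ (c : ℝ) (A : Set ℝ),
      ∫ t in (fun r => c + r) ⁻¹' A, g (c + t) = ∫ t in A, g t := by
    intro c A
    exact (measurePreserving_add_left volume c).setIntegral_preimage_emb
      (MeasurableEquiv.addLeft c).measurableEmbedding _ _
  -- integrability of translates
  have hg_tr : ∀ c : ℝ, Integrable (fun t => g (c + t)) := by
    intro c
    exact (measurePreserving_add_left volume c).integrable_comp_emb
      (MeasurableEquiv.addLeft c).measurableEmbedding |>.2 hg_int
  -- positivity of G
  have hGnonneg : ∀ x, 0 ≤ G x := by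
    intro x
    rw [hG]
    exact setIntegral_nonneg measurableSet_Iio fun t _ => hnonneg t
  have hGpos : ∀ x, 0 < G x := fun x =>
    lt_of_le_of_lt (hGnonneg (x - 1)) (hGmono (by linarith))
  have hGle1 : ∀ x, G x ≤ 1 := by
    intro x
    rw [hG, ← hint]
    exact setIntegral_le_integral hg_int (Filter.Eventually.of_forall hnonneg)
  have hGlt1 : ∀ x, G x < 1 := fun x =>
    lt_of_lt_of_le (hGmono (lt_add_one x)) (hGle1 (x + 1))
  -- G splits over Ico pieces
  have hsplit : ∀ a b : ℝ, a ≤ b → G b = G a + ∫ t in Ico a b, g t := by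
    intro a b hab
    have hU : Iio a ∪ Ico a b = Iio b := by
      ext t
      simp only [mem_union, mem_Iio, mem_Ico]
      constructor
      · rintro (h | ⟨h1, h2⟩) <;> linarith
      · intro h
        rcases lt_or_ge t a with h' | h'
        · exact Or.inl h'
        · exact Or.inr ⟨h', h⟩
    have hdisj : Disjoint (Iio a) (Ico a b) :=
      disjoint_left.2 fun t ht ht' => absurd ht'.1 (not_le.2 ht)
    rw [hG b, hG a, ← hU,
      setIntegral_union hdisj measurableSet_Ico hg_int.integrableOn hg_int.integrableOn]
  -- translate Ico integrals
  have hIco : ∀ a b : ℝ, (∫ t in Ico a b, g t) = ∫ t in Ico 0 (b - a), g (a + t) := by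
    intro a b
    have : (fun r => a + r) ⁻¹' Ico a b = Ico 0 (b - a) := by
      ext t
      simp only [mem_preimage, mem_Ico]
      constructor <;> intro ⟨h1, h2⟩ <;> constructor <;> linarith
    rw [← htrans a (Ico a b), this]
  have hIio : ∀ a : ℝ, (∫ t in Iio a, g t) = ∫ t in Iio 0, g (a + t) := by
    intro a
    have : (fun r => a + r) ⁻¹' Iio a = Iio 0 := by
      ext t
      simp only [mem_preimage, mem_Iio]
      constructor <;> intro h <;> linarith
    rw [← htrans a (Iio a), this]
  -- key product inequality via Fubini and four-point log-concavity
  have key : ∀ y x s : ℝ, y ≤ x → 0 ≤ s →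
      (∫ t in Ico 0 s, g (x + t)) * (∫ r in Iio 0, g (y + r)) ≤
      (∫ t in Ico 0 s, g (y + t)) * (∫ r in Iio 0, g (x + r)) := by
    intro y x s hyx hs
    rw [← setIntegral_prod_mul, ← setIntegral_prod_mul]
    have hmeas : MeasurableSet ((Ico (0:ℝ) s) ×ˢ (Iio (0:ℝ))) :=
      measurableSet_Ico.prod measurableSet_Iio
    have hint1 : IntegrableOn (fun z : ℝ × ℝ => g (x + z.1) * g (y + z.2))
        ((Ico (0:ℝ) s) ×ˢ (Iio (0:ℝ))) (volume.prod volume) := by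
      rw [IntegrableOn, ← Measure.prod_restrict]
      exact ((hg_tr x).integrableOn).mul_prod ((hg_tr y).integrableOn)
    have hint2 : IntegrableOn (fun z : ℝ × ℝ => g (y + z.1) * g (x + z.2))
        ((Ico (0:ℝ) s) ×ˢ (Iio (0:ℝ))) (volume.prod volume) := by
      rw [IntegrableOn, ← Measure.prod_restrict]
      exact ((hg_tr y).integrableOn).mul_prod ((hg_tr x).integrableOn)
    refine setIntegral_mono_on hint1 hint2 hmeas ?_
    rintro ⟨t, r⟩ ⟨ht, hr⟩
    simp only [mem_Ico] at ht
    simp only [mem_Iio] at hr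
    have h4 := four_point_logconcave g hnonneg hlogconc
      (c := y + r) (a := y + t) (b := x + r) (d := x + t)
      (by linarith) (by linarith) (by ring)
    calc g (x + t) * g (y + r) = g (y + r) * g (x + t) := mul_comm _ _
      _ ≤ g (y + t) * g (x + r) := h4
  -- main argument
  intro x₁ hx₁ x₂ hx₂ h12
  simp only
  have hmem : ∀ x, α * G x ∈ Set.Ioo (0:ℝ) 1 := fun x =>
    ⟨mul_pos hα0 (hGpos x), by nlinarith [hGlt1 x, hGpos x]⟩
  set y₁ := Ginv (α * G x₁) with hy₁def
  set y₂ := Ginv (α * G x₂) with hy₂def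
  have hy₁ : G y₁ = α * G x₁ := hGinvR _ (hmem x₁)
  have hy₂ : G y₂ = α * G x₂ := hGinvR _ (hmem x₂)
  have hyx : y₁ ≤ x₁ := by
    have : G y₁ < G x₁ := by rw [hy₁]; nlinarith [hGpos x₁]
    exact (hGmono.lt_iff_lt.1 this).le
  set s := x₂ - x₁ with hs_def
  have hs : 0 ≤ s := by linarith
  -- increments
  have hx_inc : G x₂ = G x₁ + ∫ t in Ico 0 s, g (x₁ + t) := by
    rw [← hIco x₁ x₂]; exact hsplit x₁ x₂ h12
  have hy_inc : G (y₁ + s) = G y₁ + ∫ t in Ico 0 s, g (y₁ + t) := by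
    have := hsplit y₁ (y₁ + s) (by linarith)
    rw [this, hIco y₁ (y₁ + s)]
    ring_nf
  have hGy₁ : G y₁ = ∫ r in Iio 0, g (y₁ + r) := by rw [hG, hIio]
  have hGx₁ : G x₁ = ∫ r in Iio 0, g (x₁ + r) := by rw [hG, hIio]
  have hk := key y₁ x₁ s hyx hs
  rw [← hGy₁, ← hGx₁, hy₁] at hk
  -- hk : (∫ t in Ico 0 s, g (x₁ + t)) * (α * G x₁) ≤ (∫ t in Ico 0 s, g (y₁ + t)) * G x₁
  have hmain : α * G x₂ ≤ G (y₁ + s) := by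
    rw [hx_inc, hy_inc, hy₁]
    nlinarith [hGpos x₁]
  have : G y₂ ≤ G (y₁ + s) := by rw [hy₂]; exact hmain
  have hy2le : y₂ ≤ y₁ + s := hGmono.le_iff_le.1 this
  linarith
end

section
/- With g symmetric about 0, unimodal and log-concave, α ∈ (0,1), d₀ = G⁻¹(1/(1+α)), d₁ = G⁻¹(1−α/2): the solution x₁(θ) of 2G(x₁)−1 = (1−α)G(x₁+θ) is increasing in θ ≥ 0, with x₁(0) = d₀ and x₁(θ) → d₁ as θ → ∞. -/
open MeasureTheory Set Filter Topology

theorem stmt_9 (g G Ginv : ℝ → ℝ) (α d₀ d₁ : ℝ) (x₁ : ℝ → ℝ)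
    (hnonneg : ∀ x, 0 ≤ g x)
    (hint : ∫ x, g x = 1)
    (hsym : ∀ x, g (-x) = g x)
    (hunimodal : AntitoneOn g (Set.Ici 0))
    (hlogconc : ConcaveOn ℝ {x | 0 < g x} (fun x => Real.log (g x)))
    (hG : ∀ x, G x = ∫ t in Set.Iio x, g t)
    (hGmono : StrictMono G)
    (hGcont : Continuous G)
    (hGinvL : ∀ x, Ginv (G x) = x)
    (hGinvR : ∀ t ∈ Set.Ioo (0:ℝ) 1, G (Ginv t) = t)
    (hα : α ∈ Set.Ioo (0:ℝ) 1)
    (hd₀ : d₀ = Ginv (1 / (1 + α)))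
    (hd₁ : d₁ = Ginv (1 - α / 2))
    (hx₁ : ∀ θ, 0 ≤ θ → 2 * G (x₁ θ) - 1 = (1 - α) * G (x₁ θ + θ)) :
    StrictMonoOn x₁ (Set.Ici 0) ∧ x₁ 0 = d₀ ∧
      Tendsto x₁ atTop (nhds d₁) := by
  obtain ⟨hα0, hα1⟩ := hα
  -- g is integrable
  have hgInt : Integrable g := by
    by_contra h
    rw [integral_undef h] at hint
    norm_num at hint
  have hIic : ∀ x : ℝ, G x = ∫ t in Set.Iic x, g t := fun x => by
    rw [hG]; exact setIntegral_congr_set Iio_ae_eq_Iic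
  -- bounds on G
  have hGnonneg : ∀ x, 0 ≤ G x := fun x => by
    rw [hG]; exact setIntegral_nonneg measurableSet_Iio fun t _ => hnonneg t
  have hGpos : ∀ x, 0 < G x := fun x =>
    lt_of_le_of_lt (hGnonneg (x - 1)) (hGmono (by linarith))
  have hGle1 : ∀ x, G x ≤ 1 := fun x => by
    rw [hG, ← hint]
    exact setIntegral_le_integral hgInt (Eventually.of_forall hnonneg)
  -- G 0 = 1/2
  have hGhalf : G 0 = 1 / 2 := by
    have h1 : ∫ x in Set.Ioi (0:ℝ), g x = ∫ x in Set.Iic (0:ℝ), g x := by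
      have := integral_comp_neg_Ioi (0 : ℝ) g
      simp only [hsym, neg_zero] at this
      exact this
    have h2 : (∫ x in Set.Iic (0:ℝ), g x) + ∫ x in Set.Ioi (0:ℝ), g x = 1 := by
      rw [intervalIntegral.integral_Iic_add_Ioi hgInt.integrableOn hgInt.integrableOn, hint]
    rw [hIic]
    linarith
  -- G tends to 1 at +∞
  have hGtop : Tendsto G atTop (𝓝 1) := by
    have h := tendsto_setIntegral_of_monotone (μ := volume) (f := g)
      (s := fun i : ℝ => Set.Iio i) (fun i => measurableSet_Iio)
      (fun i j hij => Iio_subset_Iio hij) (hgInt.integrableOn)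
    have hU : (⋃ n : ℝ, Set.Iio n) = Set.univ := iUnion_Iio
    rw [hU] at h
    simp only [Measure.restrict_univ, hint] at h
    exact h.congr fun x => (hG x).symm
  -- the shift lemma: increments of G over intervals in [0, ∞) shrink when shifted right
  have hshift : ∀ b a c : ℝ, 0 ≤ b → b ≤ a → 0 ≤ c →
      G (a + c) - G (b + c) ≤ G a - G b := by
    intro b a c hb hba hc
    have e1 : G a - G b = ∫ x in b..a, g x := by
      rw [hIic, hIic]
      exact intervalIntegral.integral_Iic_sub_Iic hgInt.integrableOn hgInt.integrableOn
    have e2 : G (a + c) - G (b + c) = ∫ x in b..a, g (x + c) := by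
      rw [hIic, hIic, intervalIntegral.integral_Iic_sub_Iic hgInt.integrableOn hgInt.integrableOn,
        intervalIntegral.integral_comp_add_right]
    rw [e1, e2]
    refine intervalIntegral.integral_mono_on hba ?_ hgInt.intervalIntegrable ?_
    · exact (hgInt.comp_add_right c).intervalIntegrable
    · intro x hx
      exact hunimodal (le_trans hb hx.1) (by simp only [Set.mem_Ici]; linarith [le_trans hb hx.1])
        (by linarith)
  -- every solution is positive
  have hxpos : ∀ θ, 0 ≤ θ → 0 < x₁ θ := by
    intro θ hθ
    have e := hx₁ θ hθ
    have h2 : G 0 < G (x₁ θ) := by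
      rw [hGhalf]
      nlinarith [hGpos (x₁ θ + θ)]
    exact hGmono.lt_iff_lt.mp h2
  -- strict monotonicity
  have hmonoOn : StrictMonoOn x₁ (Set.Ici 0) := by
    intro θ hθ θ' hθ' hlt
    by_contra hle
    push_neg at hle
    have ea := hx₁ θ hθ
    have eb := hx₁ θ' (le_trans hθ hlt.le)
    have hb0 : 0 < x₁ θ' := hxpos θ' (le_trans hθ hlt.le)
    have hsh := hshift (x₁ θ') (x₁ θ) θ' hb0.le hle (le_trans hθ hlt.le)
    have h1 : G (x₁ θ + θ) < G (x₁ θ + θ') := hGmono (by linarith)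
    have h2 : G (x₁ θ') ≤ G (x₁ θ) := hGmono.monotone hle
    nlinarith [h1, h2, hsh]
  refine ⟨hmonoOn, ?_, ?_⟩
  -- value at 0
  · have e := hx₁ 0 le_rfl
    rw [add_zero] at e
    have hne : (1 : ℝ) + α ≠ 0 := by linarith
    have hval : G (x₁ 0) = 1 / (1 + α) := by
      rw [eq_div_iff hne]; linarith
    rw [hd₀, ← hval, hGinvL]
  -- limit
  · have hGd₁ : G d₁ = 1 - α / 2 := by
      rw [hd₁]
      exact hGinvR _ ⟨by linarith, by linarith⟩
    have hub : ∀ θ, 0 ≤ θ → x₁ θ ≤ d₁ := by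
      intro θ hθ
      have e := hx₁ θ hθ
      have : G (x₁ θ) ≤ G d₁ := by
        rw [hGd₁]
        nlinarith [hGle1 (x₁ θ + θ), hGnonneg (x₁ θ + θ)]
      exact hGmono.le_iff_le.mp this
    set y : ℝ → ℝ := fun θ => x₁ (max θ 0) with hy
    have hymono : Monotone y := fun s t hst =>
      hmonoOn.monotoneOn (Set.mem_Ici.mpr (le_max_right s 0))
        (Set.mem_Ici.mpr (le_max_right t 0)) (max_le_max hst le_rfl)
    have hybdd : BddAbove (Set.range y) := by
      refine ⟨d₁, ?_⟩
      rintro _ ⟨t, rfl⟩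
      exact hub _ (le_max_right _ _)
    have hyt : Tendsto y atTop (𝓝 (⨆ t, y t)) := tendsto_atTop_ciSup hymono hybdd
    have hcong : y =ᶠ[atTop] x₁ := by
      filter_upwards [eventually_ge_atTop (0 : ℝ)] with t ht
      simp [hy, max_eq_left ht]
    set L := ⨆ t, y t with hL
    have hxL : Tendsto x₁ atTop (𝓝 L) := hyt.congr' hcong
    -- identify the limit
    have hsum : Tendsto (fun θ => x₁ θ + θ) atTop atTop := by
      refine tendsto_atTop_mono' atTop ?_ (tendsto_atTop_add_const_left atTop (x₁ 0) tendsto_id)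
      filter_upwards [eventually_ge_atTop (0 : ℝ)] with θ hθ
      have : x₁ 0 ≤ x₁ θ := hmonoOn.monotoneOn (Set.mem_Ici.mpr le_rfl)
        (Set.mem_Ici.mpr hθ) hθ
      simpa using this
    have h1' : Tendsto (fun θ => 2 * G (x₁ θ) - 1) atTop (𝓝 (2 * G L - 1)) := by
      have hc := (hGcont.tendsto L).comp hxL
      exact (hc.const_mul 2).sub_const 1
    have h2' : Tendsto (fun θ => (1 - α) * G (x₁ θ + θ)) atTop (𝓝 ((1 - α) * 1)) :=
      (hGtop.comp hsum).const_mul _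
    have heqv : (fun θ => 2 * G (x₁ θ) - 1) =ᶠ[atTop] fun θ => (1 - α) * G (x₁ θ + θ) := by
      filter_upwards [eventually_ge_atTop (0 : ℝ)] with θ hθ
      exact hx₁ θ hθ
    have heq : 2 * G L - 1 = (1 - α) * 1 :=
      tendsto_nhds_unique (h1'.congr' heqv) h2'
    have hGL : G L = G d₁ := by rw [hGd₁]; linarith
    have hLd : L = d₁ := hGmono.injective hGL
    rwa [hLd] at hxL
end

section
/- Let G be the CDF of a symmetric unimodal log-concave density g, α ∈ (0,1/3], d₀ = G⁻¹(1/(1+α)). Then G(2d₀) ≥ (1 − 3α²)/(1 − α²). -/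
open MeasureTheory Set

-- four-point inequality for concave functions: equal sums, nested points
lemma four_point_concave {s : Set ℝ} {f : ℝ → ℝ} (hf : ConcaveOn ℝ s f)
    {u v p q : ℝ} (hu : u ∈ s) (hv : v ∈ s)
    (hup : u ≤ p) (hpv : p ≤ v) (huq : u ≤ q) (hqv : q ≤ v)
    (hsum : p + q = u + v) :
    f u + f v ≤ f p + f q := by
  rcases eq_or_lt_of_le (hup.trans hpv) with h | huv
  · have hp : p = u := le_antisymm (by linarith) hup
    have hq : q = v := by linarith
    rw [hp, hq]
  · have hvu : 0 < v - u := by linarith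
    set a := (v - p) / (v - u) with ha_def
    set b := (p - u) / (v - u) with hb_def
    have ha : 0 ≤ a := div_nonneg (by linarith) hvu.le
    have hb : 0 ≤ b := div_nonneg (by linarith) hvu.le
    have hab : a + b = 1 := by rw [ha_def, hb_def]; field_simp; ring
    have h1 : a • u + b • v = p := by
      simp only [smul_eq_mul, ha_def, hb_def]; field_simp; ring
    have h2 : b • u + a • v = q := by
      simp only [smul_eq_mul, ha_def, hb_def]; field_simp; nlinarith [hsum]
    have i1 := hf.2 hu hv ha hb hab
    have i2 := hf.2 hu hv hb ha (by linarith)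
    rw [h1] at i1
    rw [h2] at i2
    simp only [smul_eq_mul] at i1 i2
    calc f u + f v = (a * f u + b * f v) + (b * f u + a * f v) := by
          have h := hab
          have : f u + f v = (a + b) * f u + (a + b) * f v := by rw [h]; ring
          rw [this]; ring
      _ ≤ f p + f q := add_le_add i1 i2

theorem stmt_12 (g G Ginv : ℝ → ℝ) (α d₀ : ℝ)
    (hnonneg : ∀ x, 0 ≤ g x)
    (hint : ∫ x, g x = 1)
    (hsym : ∀ x, g (-x) = g x)
    (hunimodal : AntitoneOn g (Set.Ici 0))
    (hlogconc : ConcaveOn ℝ {x | 0 < g x} (fun x => Real.log (g x)))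
    (hG : ∀ x, G x = ∫ t in Set.Iio x, g t)
    (hGmono : StrictMono G)
    (hGcont : Continuous G)
    (hGinvL : ∀ x, Ginv (G x) = x)
    (hGinvR : ∀ t ∈ Set.Ioo (0:ℝ) 1, G (Ginv t) = t)
    (hα : α ∈ Set.Ioc (0:ℝ) (1/3))
    (hd₀ : d₀ = Ginv (1 / (1 + α))) :
    G (2 * d₀) ≥ (1 - 3 * α ^ 2) / (1 - α ^ 2) := by
  obtain ⟨hα0, hα3⟩ := hα
  have hα1 : α < 1 := lt_of_le_of_lt hα3 (by norm_num)
  have h1α : (0:ℝ) < 1 + α := by linarith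
  have hgint : Integrable g := by
    by_contra h
    rw [integral_undef h] at hint; norm_num at hint
  -- G x written via Iic
  have hGIic : ∀ x, G x = ∫ t in Iic x, g t := fun x => by
    rw [hG x]; exact setIntegral_congr_set Iio_ae_eq_Iic
  -- tail + G = 1
  have hsplit : ∀ x : ℝ, G x + ∫ t in Ici x, g t = 1 := by
    intro x
    rw [hG x, ← hint]
    exact intervalIntegral.integral_Iio_add_Ici hgint.integrableOn hgint.integrableOn
  -- G 0 = 1/2
  have hG0 : G 0 = 1/2 := by
    have hIoi0 : ∫ t in Ioi (0:ℝ), g t = ∫ t in Iio (0:ℝ), g t := by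
      have h := integral_comp_neg_Ioi (0:ℝ) g
      simp only [hsym, neg_zero] at h
      rw [h]
      exact (setIntegral_congr_set Iio_ae_eq_Iic).symm
    have h0 := hsplit 0
    have hIci : ∫ t in Ici (0:ℝ), g t = ∫ t in Ioi (0:ℝ), g t :=
      (setIntegral_congr_set Ioi_ae_eq_Ici).symm
    rw [hIci, hIoi0, ← hG 0] at h0
    linarith
  have hmem : 1 / (1 + α) ∈ Ioo (0:ℝ) 1 :=
    ⟨by positivity, by rw [div_lt_one h1α]; linarith⟩
  have hGd : G d₀ = 1 / (1 + α) := by rw [hd₀]; exact hGinvR _ hmem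
  have hd0pos : 0 < d₀ := by
    have : G 0 < G d₀ := by
      rw [hG0, hGd, lt_div_iff₀ h1α]; linarith
    exact hGmono.lt_iff_lt.mp this
  -- notation
  set z := d₀ with hz
  have hz0 : 0 ≤ z := hd0pos.le
  set C : ℝ := ∫ b in (0:ℝ)..z, g b with hCdef
  set D : ℝ := ∫ b in z..(2*z), g b with hDdef
  set Tz : ℝ := ∫ t in Ici z, g t with hTzdef
  set T2z : ℝ := ∫ t in Ici (2*z), g t with hT2zdef
  have hTzval : Tz = α / (1 + α) := by
    have h := hsplit z
    rw [hGd] at h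
    field_simp at h ⊢
    linarith
  have hCval : C = (1 - α) / (2 * (1 + α)) := by
    have h : C = G z - G 0 := by
      rw [hCdef, ← intervalIntegral.integral_Iic_sub_Iic hgint.integrableOn hgint.integrableOn,
        ← hGIic z, ← hGIic 0]
    rw [h, hGd, hG0]
    field_simp
    ring
  have hCpos : 0 < C := by rw [hCval]; apply div_pos <;> linarith
  -- pointwise four-point inequality
  have hkey : ∀ t ∈ Ici (2*z), ∀ b ∈ Icc (0:ℝ) z, g t * g b ≤ g (t - z) * g (z + b) := by
    intro t ht b hb
    simp only [mem_Ici] at ht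
    obtain ⟨hb0, hbz⟩ := hb
    rcases eq_or_lt_of_le (hnonneg t) with h0 | hpos
    · rw [← h0]
      simp only [zero_mul]
      exact mul_nonneg (hnonneg _) (hnonneg _)
    · -- g t > 0, hence g positive at all four points
      have ht0 : 0 ≤ t := by linarith
      have hposat : ∀ x, 0 ≤ x → x ≤ t → 0 < g x := fun x hx hxt =>
        lt_of_lt_of_le hpos (hunimodal (mem_Ici.mpr hx) (mem_Ici.mpr ht0) hxt)
      have hgb : 0 < g b := hposat b hb0 (by linarith)
      have hgzb : 0 < g (z + b) := hposat _ (by linarith) (by linarith)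
      have hgtz : 0 < g (t - z) := hposat _ (by linarith) (by linarith)
      have hfour := four_point_concave hlogconc (u := b) (v := t) (p := z + b) (q := t - z)
        hgb hpos (by linarith) (by linarith) (by linarith) (by linarith) (by ring)
      calc g t * g b = Real.exp (Real.log (g b) + Real.log (g t)) := by
            rw [Real.exp_add, Real.exp_log hgb, Real.exp_log hpos]; ring
        _ ≤ Real.exp (Real.log (g (z + b)) + Real.log (g (t - z))) := Real.exp_le_exp.mpr hfour
        _ = g (t - z) * g (z + b) := by
            rw [Real.exp_add, Real.exp_log hgzb, Real.exp_log hgtz]; ring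
  -- integrate over b : for t ≥ 2z,  g t * C ≤ g (t-z) * D
  have hstep1 : ∀ t ∈ Ici (2*z), g t * C ≤ g (t - z) * D := by
    intro t ht
    have hii : IntervalIntegrable g volume 0 z := hgint.intervalIntegrable
    have h1 : ∫ b in (0:ℝ)..z, g t * g b ≤ ∫ b in (0:ℝ)..z, g (t - z) * g (z + b) := by
      apply intervalIntegral.integral_mono_on hz0
      · exact (hii.const_mul _)
      · have : IntervalIntegrable (fun b => g (z + b)) volume 0 z := by
          have := (hgint.comp_add_left z).intervalIntegrable (a := 0) (b := z)
          exact this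
        exact this.const_mul _
      · exact fun b hb => hkey t ht b hb
    rw [intervalIntegral.integral_const_mul, intervalIntegral.integral_const_mul] at h1
    have htrans : ∫ b in (0:ℝ)..z, g (z + b) = D := by
      have h' := intervalIntegral.integral_comp_add_left (a := (0:ℝ)) (b := z) g z
      rw [hDdef, h']
      norm_num [two_mul]
    rw [htrans] at h1
    exact h1
  -- integrate over t : T2z * C ≤ Tz * D
  have hshiftint : IntegrableOn (fun t => g (t - z)) (Ici (2*z)) :=
    (hgint.comp_sub_right z).integrableOn
  have hstep2 : T2z * C ≤ Tz * D := by
    have h2 : ∫ t in Ici (2*z), g t * C ≤ ∫ t in Ici (2*z), g (t - z) * D := by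
      apply setIntegral_mono_on
      · exact hgint.integrableOn.mul_const _
      · exact hshiftint.mul_const _
      · exact measurableSet_Ici
      · exact hstep1
    rw [integral_mul_const, integral_mul_const] at h2
    have htr : ∫ t in Ici (2*z), g (t - z) = Tz := by
      rw [hTzdef]
      have : ∀ t : ℝ, (Ici (2*z)).indicator (fun t => g (t - z)) t
          = (Ici z).indicator g (t - z) := by
        intro t
        by_cases h : t ∈ Ici (2*z)
        · rw [indicator_of_mem h, indicator_of_mem (by simp only [mem_Ici] at h ⊢; linarith)]
        · rw [indicator_of_notMem h, indicator_of_notMem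
            (by simp only [mem_Ici] at h ⊢; linarith)]
      rw [← integral_indicator measurableSet_Ici, ← integral_indicator measurableSet_Ici]
      simp_rw [this]
      exact integral_sub_right_eq_self ((Ici z).indicator g) z
    rw [htr] at h2
    exact h2
  -- D ≤ Tz
  have hDTz : D ≤ Tz := by
    have hD : D = ∫ b in Ioc z (2*z), g b := by
      rw [hDdef, intervalIntegral.integral_of_le (by linarith)]
    rw [hD, hTzdef]
    apply setIntegral_mono_set hgint.integrableOn
    · exact Filter.Eventually.of_forall fun x => hnonneg x
    · exact HasSubset.Subset.eventuallyLE (fun x hx => le_of_lt hx.1)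
  have hTznn : 0 ≤ Tz := by rw [hTzval]; positivity
  have hchain : T2z * C ≤ Tz * Tz :=
    hstep2.trans (mul_le_mul_of_nonneg_left hDTz hTznn)
  -- finish
  have hG2 : G (2*z) = 1 - T2z := by have := hsplit (2*z); linarith
  rw [hG2]
  rw [hTzval, hCval] at hchain
  have h1mα : (0:ℝ) < 1 - α := by linarith
  have hsq : (0:ℝ) < 1 - α^2 := by nlinarith
  have key : T2z * ((1-α)*(1+α)) ≤ 2*α^2 := by
    have h2 : ((1-α)/(2*(1+α))) * (2*(1+α)^2) = (1-α)*(1+α) := by field_simp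
    have h3 : (α/(1+α)*(α/(1+α))) * (2*(1+α)^2) = 2*α^2 := by field_simp
    calc T2z * ((1-α)*(1+α)) = T2z * ((1-α)/(2*(1+α))) * (2*(1+α)^2) := by
          rw [mul_assoc, h2]
      _ ≤ (α/(1+α)*(α/(1+α))) * (2*(1+α)^2) :=
          mul_le_mul_of_nonneg_right hchain (by positivity)
      _ = 2*α^2 := h3
  rw [ge_iff_le, div_le_iff₀ hsq]
  nlinarith [key]
end

section
/- Under the setup of Lemma 5, C(2d₀) = G(x₁(2d₀)) − G(x₂(2d₀)) with x₂(2d₀) = −d₀, and C(2d₀) ≥ 1 − 3α/2. -/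
open MeasureTheory Set


lemma four_point (g : ℝ → ℝ) (hnonneg : ∀ x, 0 ≤ g x)
    (hlogconc : ConcaveOn ℝ {x | 0 < g x} (fun x => Real.log (g x))) :
    ∀ s t b : ℝ, 0 ≤ b → s ≤ t → g (t + b) * g s ≤ g t * g (s + b) := by
  intro s t b hb hst
  rcases eq_or_lt_of_le (hnonneg (t + b)) with h | h
  · rw [← h, zero_mul]; exact mul_nonneg (hnonneg _) (hnonneg _)
  rcases eq_or_lt_of_le (hnonneg s) with h' | h'
  · rw [← h', mul_zero]; exact mul_nonneg (hnonneg _) (hnonneg _)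
  rcases eq_or_lt_of_le hb with rfl | hb'
  · simp
  have hmemz : (t + b) ∈ {x | 0 < g x} := h
  have hmems : s ∈ {x | 0 < g x} := h'
  have hden : 0 < t + b - s := by linarith
  set lam := b / (t + b - s) with hlam
  have hlam0 : 0 ≤ lam := div_nonneg hb hden.le
  have hlam1 : lam ≤ 1 := by rw [hlam, div_le_one hden]; linarith
  have hk : lam * (t + b - s) = b := div_mul_cancel₀ _ hden.ne'
  have e1 : (1 - lam) • (t + b) + lam • s = t := by
    rw [smul_eq_mul, smul_eq_mul]; linear_combination (-1 : ℝ) * hk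
  have e2 : lam • (t + b) + (1 - lam) • s = s + b := by
    rw [smul_eq_mul, smul_eq_mul]; linear_combination hk
  have hmemt : t ∈ {x | 0 < g x} := by
    have := hlogconc.1 hmemz hmems (show (0:ℝ) ≤ 1 - lam by linarith) hlam0 (by ring)
    rwa [e1] at this
  have hmemsb : (s + b) ∈ {x | 0 < g x} := by
    have := hlogconc.1 hmemz hmems hlam0 (show (0:ℝ) ≤ 1 - lam by linarith) (by ring)
    rwa [e2] at this
  have c1 := hlogconc.2 hmemz hmems (show (0:ℝ) ≤ 1 - lam by linarith) hlam0 (by ring)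
  have c2 := hlogconc.2 hmemz hmems hlam0 (show (0:ℝ) ≤ 1 - lam by linarith) (by ring)
  rw [e1] at c1
  rw [e2] at c2
  simp only [smul_eq_mul] at c1 c2
  have hsum : Real.log (g (t + b)) + Real.log (g s) ≤
      Real.log (g t) + Real.log (g (s + b)) := by linarith
  calc g (t + b) * g s = Real.exp (Real.log (g (t + b)) + Real.log (g s)) := by
        rw [Real.exp_add, Real.exp_log h, Real.exp_log h']
    _ ≤ Real.exp (Real.log (g t) + Real.log (g (s + b))) := Real.exp_le_exp.mpr hsum
    _ = g t * g (s + b) := by rw [Real.exp_add, Real.exp_log hmemt, Real.exp_log hmemsb]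


lemma surv_mul (g : ℝ → ℝ) (hnonneg : ∀ x, 0 ≤ g x) (hg : Integrable g)
    (h4 : ∀ s t b : ℝ, 0 ≤ b → s ≤ t → g (t + b) * g s ≤ g t * g (s + b))
    (a b : ℝ) (ha : 0 ≤ a) (hb : 0 ≤ b) :
    (∫ t in Ioi (a + b), g t) * (∫ t in Ioi (0:ℝ), g t) ≤
      (∫ t in Ioi a, g t) * (∫ t in Ioi b, g t) := by
  set gb : ℝ → ℝ := fun t => g (t + b) with hgbdef
  have hgb : Integrable gb := by
    have := (measurePreserving_add_right (volume : Measure ℝ) b).integrable_comp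
      hg.aestronglyMeasurable
    exact this.mpr hg
  set p : ℝ → ℝ := (Ioi (0:ℝ)).indicator g with hpdef
  set q : ℝ → ℝ := (Ioi a).indicator g with hqdef
  set r : ℝ → ℝ := (Ioi (0:ℝ)).indicator gb with hrdef
  set w : ℝ → ℝ := (Ioi a).indicator gb with hwdef
  have hp : Integrable p := hg.indicator measurableSet_Ioi
  have hq : Integrable q := hg.indicator measurableSet_Ioi
  have hr : Integrable r := hgb.indicator measurableSet_Ioi
  have hw : Integrable w := hgb.indicator measurableSet_Ioi
  have ip : ∫ x, p x = ∫ t in Ioi (0:ℝ), g t := integral_indicator measurableSet_Ioi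
  have iq : ∫ x, q x = ∫ t in Ioi a, g t := integral_indicator measurableSet_Ioi
  have ir : ∫ x, r x = ∫ t in Ioi b, g t := by
    have h1 : r = fun t => (Ioi b).indicator g (t + b) := by
      funext t
      simp only [hrdef, hgbdef, Set.indicator_apply, mem_Ioi]
      by_cases ht : 0 < t
      · simp [ht, show b < t + b by linarith]
      · simp [ht, show ¬ b < t + b by intro hc; exact ht (by linarith)]
    rw [h1]
    rw [integral_add_right_eq_self ((Ioi b).indicator g) b]
    exact integral_indicator measurableSet_Ioi
  have iw : ∫ x, w x = ∫ t in Ioi (a + b), g t := by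
    have h1 : w = fun t => (Ioi (a + b)).indicator g (t + b) := by
      funext t
      simp only [hwdef, hgbdef, Set.indicator_apply, mem_Ioi]
      by_cases ht : a < t
      · simp [ht, show a + b < t + b by linarith]
      · simp [ht, show ¬ a + b < t + b by intro hc; exact ht (by linarith)]
    rw [h1]
    rw [integral_add_right_eq_self ((Ioi (a + b)).indicator g) b]
    exact integral_indicator measurableSet_Ioi
  -- pointwise key inequality
  have key0 : ∀ s t : ℝ, s ≤ t → p s * w t + w s * p t ≤ r s * q t + q s * r t := by
    intro s t hst
    by_cases hsa : a < s
    · have hta : a < t := lt_of_lt_of_le hsa hst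
      have hs0 : (0:ℝ) < s := lt_of_le_of_lt ha hsa
      have ht0 : (0:ℝ) < t := lt_of_le_of_lt ha hta
      simp only [hpdef, hqdef, hrdef, hwdef, hgbdef, Set.indicator_apply, mem_Ioi,
        if_pos hsa, if_pos hta, if_pos hs0, if_pos ht0]
      ring_nf
      nlinarith []
    · -- w s = 0, q s = 0
      have hws : w s = 0 := by simp [hwdef, Set.indicator_apply, mem_Ioi, hsa]
      have hqs : q s = 0 := by simp [hqdef, Set.indicator_apply, mem_Ioi, hsa]
      rw [hws, hqs, zero_mul, zero_mul, add_zero]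
      by_cases hta : a < t
      · by_cases hs0 : (0:ℝ) < s
        · have : p s = g s := by simp [hpdef, Set.indicator_apply, mem_Ioi, hs0]
          rw [this]
          have : r s = g (s + b) := by simp [hrdef, hgbdef, Set.indicator_apply, mem_Ioi, hs0]
          rw [this]
          have : w t = g (t + b) := by simp [hwdef, hgbdef, Set.indicator_apply, mem_Ioi, hta]
          rw [this]
          have : q t = g t := by simp [hqdef, Set.indicator_apply, mem_Ioi, hta]
          rw [this]
          have := h4 s t b hb hst
          nlinarith [hnonneg t, hnonneg (s + b), mul_nonneg (hnonneg t) (hnonneg (s+b))]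
        · have hps : p s = 0 := by simp [hpdef, Set.indicator_apply, mem_Ioi, hs0]
          have hrs : r s = 0 := by simp [hrdef, Set.indicator_apply, mem_Ioi, hs0]
          rw [hps, hrs, zero_mul, zero_mul]
          have : 0 ≤ q s * r t := mul_nonneg (Set.indicator_nonneg (fun x _ => hnonneg x) s)
            (Set.indicator_nonneg (fun x _ => hnonneg (x + b)) t)
          linarith [this]
      · have hwt : w t = 0 := by simp [hwdef, Set.indicator_apply, mem_Ioi, hta]
        have hqt : q t = 0 := by simp [hqdef, Set.indicator_apply, mem_Ioi, hta]
        rw [hwt, hqt, mul_zero, mul_zero]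
        have : 0 ≤ q s * r t := mul_nonneg (Set.indicator_nonneg (fun x _ => hnonneg x) s)
          (Set.indicator_nonneg (fun x _ => hnonneg (x + b)) t)
        linarith [this]
  have key : ∀ s t : ℝ, p s * w t + w s * p t ≤ r s * q t + q s * r t := by
    intro s t
    rcases le_total s t with h | h
    · exact key0 s t h
    · have := key0 t s h
      linarith
  -- integrate over the product measure
  have hint1 : Integrable (fun z : ℝ × ℝ => p z.1 * w z.2 + w z.1 * p z.2)
      (volume.prod volume) := (hp.mul_prod hw).add (hw.mul_prod hp)
  have hint2 : Integrable (fun z : ℝ × ℝ => r z.1 * q z.2 + q z.1 * r z.2)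
      (volume.prod volume) := (hr.mul_prod hq).add (hq.mul_prod hr)
  have hmono := integral_mono hint1 hint2 (fun z => key z.1 z.2)
  rw [integral_add (hp.mul_prod hw) (hw.mul_prod hp),
      integral_add (hr.mul_prod hq) (hq.mul_prod hr),
      integral_prod_mul, integral_prod_mul, integral_prod_mul, integral_prod_mul] at hmono
  rw [ip, iq, ir, iw] at hmono
  linarith

theorem stmt_13 (g G Ginv : ℝ → ℝ) (α d₀ : ℝ) (x₁ x₂ C : ℝ → ℝ)
    (hnonneg : ∀ x, 0 ≤ g x)
    (hint : ∫ x, g x = 1)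
    (hsym : ∀ x, g (-x) = g x)
    (hunimodal : AntitoneOn g (Set.Ici 0))
    (hlogconc : ConcaveOn ℝ {x | 0 < g x} (fun x => Real.log (g x)))
    (hG : ∀ x, G x = ∫ t in Set.Iio x, g t)
    (hGmono : StrictMono G)
    (hGcont : Continuous G)
    (hGinvL : ∀ x, Ginv (G x) = x)
    (hGinvR : ∀ t ∈ Set.Ioo (0:ℝ) 1, G (Ginv t) = t)
    (hα : α ∈ Set.Ioo (0:ℝ) 1)
    (hd₀ : d₀ = Ginv (1 / (1 + α)))
    (hx₁ : 2 * G (x₁ (2 * d₀)) - 1 = (1 - α) * G (x₁ (2 * d₀) + 2 * d₀))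
    (hx₂ : 1 - 2 * G (x₂ (2 * d₀)) = (1 - α) * G (x₂ (2 * d₀) + 2 * d₀))
    (hC : C (2 * d₀) = G (x₁ (2 * d₀)) - G (x₂ (2 * d₀))) :
    x₂ (2 * d₀) = -d₀ ∧ C (2 * d₀) ≥ 1 - 3 * α / 2 := by
  obtain ⟨hα0, hα1⟩ := hα
  have h1α : (0:ℝ) < 1 + α := by linarith
  -- g is integrable
  have hg : Integrable g := by
    by_contra h
    rw [integral_undef h] at hint
    exact zero_ne_one hint
  -- G x + S x = 1
  have hGS : ∀ x : ℝ, G x + (∫ t in Ioi x, g t) = 1 := by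
    intro x
    rw [hG x, ← integral_Ici_eq_integral_Ioi,
      intervalIntegral.integral_Iio_add_Ici hg.integrableOn hg.integrableOn, hint]
  -- reflection: G (-x) = 1 - G x
  have hGneg : ∀ x : ℝ, G (-x) = 1 - G x := by
    intro x
    have h1 : G (-x) = ∫ t in Iic (-x), g t := by
      rw [hG, integral_Iic_eq_integral_Iio]
    have h2 : (∫ t in Ioi x, g (-t)) = ∫ t in Iic (-x), g t := integral_comp_neg_Ioi x g
    have h3 : (∫ t in Ioi x, g (-t)) = ∫ t in Ioi x, g t := by
      simp only [hsym]
    rw [h1, ← h2, h3]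
    linarith [hGS x]
  have hG0 : G 0 = 1 / 2 := by
    have := hGneg 0
    rw [neg_zero] at this
    linarith
  have hmem : (1 / (1 + α)) ∈ Set.Ioo (0:ℝ) 1 := by
    constructor
    · positivity
    · rw [div_lt_one h1α]; linarith
  have hGd : G d₀ = 1 / (1 + α) := by rw [hd₀]; exact hGinvR _ hmem
  have hd0pos : 0 < d₀ := by
    have : G 0 < G d₀ := by
      rw [hG0, hGd, div_lt_div_iff₀ (by norm_num) h1α]
      linarith
    exact hGmono.lt_iff_lt.mp this
  have hGnegd : G (-d₀) = α / (1 + α) := by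
    rw [hGneg, hGd]
    field_simp
    ring
  -- x₂ part: -d₀ satisfies the equation
  have heqd : 1 - 2 * G (-d₀) = (1 - α) * G (-d₀ + 2 * d₀) := by
    have : -d₀ + 2 * d₀ = d₀ := by ring
    rw [this, hGnegd, hGd]
    field_simp
    ring
  have hx₂eq : x₂ (2 * d₀) = -d₀ := by
    set y := x₂ (2 * d₀) with hy
    rcases lt_trichotomy y (-d₀) with hlt | heq | hgt
    · exfalso
      have h1 : G y < G (-d₀) := hGmono hlt
      have h2 : G (y + 2 * d₀) < G (-d₀ + 2 * d₀) := hGmono (by linarith)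
      have h3 : (1 - α) * G (y + 2 * d₀) < (1 - α) * G (-d₀ + 2 * d₀) :=
        mul_lt_mul_of_pos_left h2 (by linarith)
      linarith
    · exact heq
    · exfalso
      have h1 : G (-d₀) < G y := hGmono hgt
      have h2 : G (-d₀ + 2 * d₀) < G (y + 2 * d₀) := hGmono (by linarith)
      have h3 : (1 - α) * G (-d₀ + 2 * d₀) < (1 - α) * G (y + 2 * d₀) :=
        mul_lt_mul_of_pos_left h2 (by linarith)
      linarith
  refine ⟨hx₂eq, ?_⟩
  -- C part
  set u := G (x₁ (2 * d₀)) with hu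
  -- u ≥ 1/(1+α)
  have hmono1 : u ≤ G (x₁ (2 * d₀) + 2 * d₀) :=
    hGmono.monotone (by linarith)
  have hu1 : 1 / (1 + α) ≤ u := by
    rw [div_le_iff₀ h1α]
    nlinarith [mul_le_mul_of_nonneg_left hmono1 (by linarith : (0:ℝ) ≤ 1 - α)]
  have hx₁ged : d₀ ≤ x₁ (2 * d₀) := by
    have : G d₀ ≤ G (x₁ (2 * d₀)) := by rw [hGd]; exact hu1
    exact hGmono.le_iff_le.mp this
  -- survival function bounds
  have hSnn : ∀ x : ℝ, 0 ≤ ∫ t in Ioi x, g t := fun x =>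
    setIntegral_nonneg measurableSet_Ioi (fun t _ => hnonneg t)
  have hS0 : (∫ t in Ioi (0:ℝ), g t) = 1 / 2 := by
    have := hGS 0; linarith
  have hSd : (∫ t in Ioi d₀, g t) = α / (1 + α) := by
    have h1 := hGS d₀
    rw [hGd] at h1
    have h2 : (1:ℝ) - 1 / (1 + α) = α / (1 + α) := by field_simp; ring
    linarith
  have h4 := four_point g hnonneg hlogconc
  have h2d : (∫ t in Ioi (2 * d₀), g t) * (∫ t in Ioi (0:ℝ), g t) ≤
      (∫ t in Ioi d₀, g t) * (∫ t in Ioi d₀, g t) := by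
    have := surv_mul g hnonneg hg h4 d₀ d₀ hd0pos.le hd0pos.le
    rwa [show d₀ + d₀ = 2 * d₀ by ring] at this
  have h3d : (∫ t in Ioi (3 * d₀), g t) * (∫ t in Ioi (0:ℝ), g t) ≤
      (∫ t in Ioi (2 * d₀), g t) * (∫ t in Ioi d₀, g t) := by
    have := surv_mul g hnonneg hg h4 (2 * d₀) d₀ (by linarith) hd0pos.le
    rwa [show 2 * d₀ + d₀ = 3 * d₀ by ring] at this
  -- S(3d₀) ≤ 4 S(d₀)^3
  have hS3 : (∫ t in Ioi (3 * d₀), g t) ≤ 4 * (α / (1 + α)) ^ 3 := by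
    rw [hS0] at h2d h3d
    rw [hSd] at h2d h3d
    nlinarith [hSnn (3 * d₀), hSnn (2 * d₀), div_nonneg hα0.le h1α.le, h2d, h3d,
      mul_le_mul_of_nonneg_right h2d (div_nonneg hα0.le h1α.le)]
  -- G(3d₀) lower bound, transferred to G(x₁ + 2d₀)
  have hG3 : 1 - 4 * (α / (1 + α)) ^ 3 ≤ G (3 * d₀) := by
    have := hGS (3 * d₀)
    linarith
  have htt : G (3 * d₀) ≤ G (x₁ (2 * d₀) + 2 * d₀) :=
    hGmono.monotone (by linarith)
  set t := G (x₁ (2 * d₀) + 2 * d₀) with ht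
  have htail : (1 - t) * (1 + α) ^ 3 ≤ 4 * α ^ 3 := by
    have h1 : 1 - t ≤ 4 * (α / (1 + α)) ^ 3 := by linarith
    have h2 : (α / (1 + α)) ^ 3 * (1 + α) ^ 3 = α ^ 3 := by
      field_simp
    nlinarith [pow_pos h1α 3]
  -- final arithmetic
  rw [hC, hx₂eq, hGnegd, ge_iff_le]
  set D := α / (1 + α) with hD
  have hq : D * (1 + α) = α := div_mul_cancel₀ _ h1α.ne'
  have h5 : (2 - α - 2 * u) * (1 + α) ^ 3 ≤ 4 * α ^ 3 * (1 - α) := by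
    have hmul := mul_le_mul_of_nonneg_right htail (show (0:ℝ) ≤ 1 - α by linarith)
    have he : (2 - α - 2 * u) * (1 + α) ^ 3 = (1 - t) * (1 + α) ^ 3 * (1 - α) := by
      linear_combination (-(1 + α) ^ 3) * hx₁
    rw [he]; exact hmul
  have hq2 : D * (1 + α) ^ 3 = α * (1 + α) ^ 2 := by linear_combination (1 + α) ^ 2 * hq
  have hpos : (0:ℝ) ≤ α ^ 2 + 3 * α ^ 4 := by positivity
  have hkey : (u - D) * (1 + α) ^ 3 - (1 - 3 * α / 2) * (1 + α) ^ 3 =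
      (4 * α ^ 3 * (1 - α) - (2 - α - 2 * u) * (1 + α) ^ 3) / 2 +
        (α * (1 + α) ^ 2 - D * (1 + α) ^ 3) + (α ^ 2 + 3 * α ^ 4) := by ring
  have hfin : (1 - 3 * α / 2) * (1 + α) ^ 3 ≤ (u - D) * (1 + α) ^ 3 := by
    linarith [h5, hq2, hpos, hkey]
  exact (mul_le_mul_iff_of_pos_right (pow_pos h1α 3)).mp hfin
end

section
/- Let g be symmetric about 0, unimodal, log-concave with α = Ḡ(d₀)/(1−Ḡ(d₀)) where d₀ = G⁻¹(1/(1+α)). If g(d₀)/g(2d₀) ≥ (1−α)/(2α) (which follows from the inequality g(z)/g(2z) ≥ 1/(2Ḡ(z)) − 1 at z = d₀), then (1−α)² g(d₀) g(d₀+d₁) + α(1−α) g(d₁) g(d₀+d₁) ≤ 2α g(d₀) g(d₁), where d₁ = G⁻¹(1−α/2) ≥ d₀. -/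
open MeasureTheory Set

theorem stmt_17 (g G Ginv : ℝ → ℝ) (α d₀ d₁ : ℝ)
    (hnonneg : ∀ x, 0 ≤ g x)
    (hint : ∫ x, g x = 1)
    (hsym : ∀ x, g (-x) = g x)
    (hunimodal : AntitoneOn g (Set.Ici 0))
    (hlogconc : ConcaveOn ℝ {x | 0 < g x} (fun x => Real.log (g x)))
    (hG : ∀ x, G x = ∫ t in Set.Iio x, g t)
    (hGinvL : ∀ x, Ginv (G x) = x)
    (hGinvR : ∀ t ∈ Set.Ioo (0:ℝ) 1, G (Ginv t) = t)
    (hα : α ∈ Set.Ioo (0:ℝ) 1)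
    (hαeq : α = (1 - G d₀) / (1 - (1 - G d₀)))
    (hd₀ : d₀ = Ginv (1 / (1 + α)))
    (hd₁ : d₁ = Ginv (1 - α / 2))
    (hd₀pos : 0 < d₀)
    (hd₀d₁ : d₀ ≤ d₁)
    (hgpos : 0 < g d₀ ∧ 0 < g d₁ ∧ 0 < g (2 * d₀) ∧ 0 < g (d₀ + d₁))
    (hratio : g d₀ / g (2 * d₀) ≥ (1 - α) / (2 * α)) :
    (1 - α) ^ 2 * g d₀ * g (d₀ + d₁) + α * (1 - α) * g d₁ * g (d₀ + d₁)
      ≤ 2 * α * g d₀ * g d₁ := by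
  obtain ⟨hg0, hg1, hg2, hg3⟩ := hgpos
  obtain ⟨hα0, hα1⟩ := hα
  have hd₁pos : 0 < d₁ := lt_of_lt_of_le hd₀pos hd₀d₁
  set μ : ℝ := d₀ / d₁ with hμ
  have hμ0 : 0 ≤ μ := le_of_lt (div_pos hd₀pos hd₁pos)
  have hμ1 : μ ≤ 1 := (div_le_one hd₁pos).2 hd₀d₁
  have hμd : μ * d₁ = d₀ := div_mul_cancel₀ d₀ (ne_of_gt hd₁pos)
  have hm0 : d₀ ∈ {x | 0 < g x} := hg0
  have hm3 : d₀ + d₁ ∈ {x | 0 < g x} := hg3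
  -- concavity at 2*d₀
  have h1 := hlogconc.2 hm0 hm3 (by linarith : (0:ℝ) ≤ 1 - μ) hμ0 (by ring)
  have h2 := hlogconc.2 hm0 hm3 hμ0 (by linarith : (0:ℝ) ≤ 1 - μ) (by ring)
  have e1 : (1 - μ) • d₀ + μ • (d₀ + d₁) = 2 * d₀ := by
    simp only [smul_eq_mul]; nlinarith [hμd]
  have e2 : μ • d₀ + (1 - μ) • (d₀ + d₁) = d₁ := by
    simp only [smul_eq_mul]; nlinarith [hμd]
  rw [e1] at h1
  rw [e2] at h2
  simp only [smul_eq_mul] at h1 h2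
  have hsum : Real.log (g d₀) + Real.log (g (d₀ + d₁))
      ≤ Real.log (g (2 * d₀)) + Real.log (g d₁) := by linarith
  have hkey : g d₀ * g (d₀ + d₁) ≤ g (2 * d₀) * g d₁ := by
    have hl : Real.log (g d₀ * g (d₀ + d₁)) ≤ Real.log (g (2 * d₀) * g d₁) := by
      rw [Real.log_mul (ne_of_gt hg0) (ne_of_gt hg3),
        Real.log_mul (ne_of_gt hg2) (ne_of_gt hg1)]
      exact hsum
    exact (Real.log_le_log_iff (by positivity) (by positivity)).1 hl
  have hr' : (1 - α) * g (2 * d₀) ≤ 2 * α * g d₀ := by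
    have := (div_le_div_iff₀ (by linarith : (0:ℝ) < 2 * α) hg2).1 hratio
    linarith
  have hanti : g d₁ ≤ g d₀ :=
    hunimodal (le_of_lt hd₀pos) (le_trans (le_of_lt hd₀pos) hd₀d₁) hd₀d₁
  nlinarith [mul_le_mul_of_nonneg_left hkey (by linarith : (0:ℝ) ≤ 1 - α),
    mul_le_mul_of_nonneg_right hr' (le_of_lt hg1),
    mul_le_mul_of_nonneg_left hanti
      (mul_nonneg (mul_nonneg hα0.le (by linarith : (0:ℝ) ≤ 1 - α)) hg3.le),
    mul_pos hg0 hg3, mul_pos hg2 hg1]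
end
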